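/- arXiv:1909.13286 — 4 statements merged into one kernel-verified Lean document; each statement's English description precedes it below -/
import Mathlib

section
/- Let $s\le k$ be positive integers and $\alpha_1,\alpha_2,\theta>0$. Let $X_1,\dots,X_k$ be i.i.d. random variables with Pareto distribution $P(\alpha_1,\theta)$ and let $Y$ be independent of them with Pareto distribution $P(\alpha_2,\theta)$. Then $P\big(\text{at least } s \text{ of } X_1,\dots,X_k \text{ exceed } Y\big) = \sum_{p=s}^{k}\sum_{u=0}^{k-p}(-1)^{u}\binom{k}{p}\binom{k-p}{u}\frac{\alpha_2}{\alpha_1(p+u)+\alpha_2}$. In particular this probability does not depend on $\theta$. -/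
open MeasureTheory ProbabilityTheory Finset Set
open scoped Classical


lemma pareto_tail_integral {c θ : ℝ} (hc : 0 < c) (hθ : 0 < θ) :
    ∫ y in Set.Ioi θ, y ^ (-c - 1) = θ ^ (-c) / c := by
  rw [integral_Ioi_rpow_of_lt (by linarith) hθ, show -c - 1 + 1 = -c by ring,
    div_neg, neg_div, neg_neg]

lemma pareto_cdf_integral {a θ x : ℝ} (ha : 0 < a) (hθ : 0 < θ) (hx : θ ≤ x) :
    ∫ y in θ..x, a * θ ^ a * y ^ (-a - 1) = 1 - (θ / x) ^ a := by
  have hx0 : 0 < x := lt_of_lt_of_le hθ hx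
  rw [intervalIntegral.integral_const_mul,
    integral_rpow (Or.inr ⟨by intro h; nlinarith [h], fun h => by
      rcases Set.mem_uIcc.1 h with ⟨h1, _⟩ | ⟨h1, _⟩ <;> linarith⟩)]
  rw [show -a - 1 + 1 = -a by ring]
  rw [Real.div_rpow hθ.le hx0.le, Real.rpow_neg hθ.le, Real.rpow_neg hx0.le]
  have h1 : θ ^ a ≠ 0 := (Real.rpow_pos_of_pos hθ a).ne'
  have h2 : x ^ a ≠ 0 := (Real.rpow_pos_of_pos hx0 a).ne'
  field_simp
  ring

noncomputable def paretoD (a θ : ℝ) : ℝ → ENNReal :=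
  Set.indicator (Set.Ioi θ) (fun y => ENNReal.ofReal (a * θ ^ a * y ^ (-a - 1)))

noncomputable def paretoM (a θ : ℝ) : Measure ℝ :=
  volume.withDensity (paretoD a θ)

lemma paretoD_integrableOn {a θ : ℝ} (ha : 0 < a) (hθ : 0 < θ) :
    IntegrableOn (fun y : ℝ => a * θ ^ a * y ^ (-a - 1)) (Set.Ioi θ) :=
  (integrableOn_Ioi_rpow_of_lt (by linarith) hθ).const_mul _

lemma paretoM_Iic_of_lt {a θ x : ℝ} (hx : x < θ) :
    paretoM a θ (Set.Iic x) = 0 := by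
  rw [paretoM, withDensity_apply _ measurableSet_Iic, paretoD,
    lintegral_indicator measurableSet_Ioi, Measure.restrict_restrict measurableSet_Ioi]
  rw [Set.Ioi_inter_Iic, Set.Ioc_eq_empty (by linarith), Measure.restrict_empty,
    lintegral_zero_measure]

lemma paretoM_Iic {a θ x : ℝ} (ha : 0 < a) (hθ : 0 < θ) (hx : θ ≤ x) :
    paretoM a θ (Set.Iic x) = ENNReal.ofReal (1 - (θ / x) ^ a) := by
  rw [paretoM, withDensity_apply _ measurableSet_Iic, paretoD,
    lintegral_indicator measurableSet_Ioi, Measure.restrict_restrict measurableSet_Ioi,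
    Set.Ioi_inter_Iic]
  rw [← ofReal_integral_eq_lintegral_ofReal
    ((paretoD_integrableOn ha hθ).mono_set Set.Ioc_subset_Ioi_self)
    ((ae_restrict_iff' measurableSet_Ioc).2 (ae_of_all _ fun y hy => by
      have : (0:ℝ) < y := lt_trans hθ hy.1
      positivity))]
  rw [← intervalIntegral.integral_of_le hx, pareto_cdf_integral ha hθ hx]

lemma paretoM_univ {a θ : ℝ} (ha : 0 < a) (hθ : 0 < θ) :
    paretoM a θ Set.univ = 1 := by
  rw [paretoM, withDensity_apply _ MeasurableSet.univ, Measure.restrict_univ,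
    paretoD, lintegral_indicator measurableSet_Ioi]
  rw [← ofReal_integral_eq_lintegral_ofReal (paretoD_integrableOn ha hθ)
    ((ae_restrict_iff' measurableSet_Ioi).2 (ae_of_all _ fun y hy => by
      have : (0:ℝ) < y := lt_trans hθ hy
      positivity))]
  rw [integral_const_mul, pareto_tail_integral ha hθ]
  rw [Real.rpow_neg hθ.le]
  rw [show a * θ ^ a * ((θ ^ a)⁻¹ / a) = (a/a) * (θ^a/θ^a) by ring,
    div_self ha.ne', div_self (Real.rpow_pos_of_pos hθ a).ne', one_mul,
    ENNReal.ofReal_one]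

instance instSFiniteParetoM (a θ : ℝ) : SFinite (paretoM a θ) := by
  rw [paretoM]; infer_instance

lemma isProbability_paretoM {a θ : ℝ} (ha : 0 < a) (hθ : 0 < θ) :
    IsProbabilityMeasure (paretoM a θ) := ⟨paretoM_univ ha hθ⟩


section helpers

lemma measurable_finset_inf' {ι δ : Type*} [MeasurableSpace δ] {S : Finset ι}
    (hS : S.Nonempty) (f : ι → δ → ℝ) (hf : ∀ i, Measurable (f i)) :
    Measurable fun x => S.inf' hS fun i => f i x := by
  induction hS using Finset.Nonempty.cons_induction with
  | singleton a => simpa using hf a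
  | cons a s ha hs ih =>
      have h2 := (hf a).min ih
      convert h2 using 1
      funext x
      exact Finset.inf'_cons (f := fun i => f i x) (H := hs)

lemma inf'_map_option {k : ℕ} (S : Finset (Fin k)) (hS : S.Nonempty)
    (F : Option (Fin k) → ℝ) :
    ((S.map ⟨some, Option.some_injective _⟩).inf' (hS.map) F)
      = S.inf' hS (fun i => F (some i)) :=
  Finset.inf'_map F (hS.map)

lemma inf'_attach_eq {ι : Type*} (T : Finset ι) (hT : T.Nonempty) (F : ι → ℝ) :
    (T.attach.inf' (Finset.attach_nonempty_iff.2 hT) fun o => F o.1) = T.inf' hT F := by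
  refine le_antisymm (Finset.le_inf' _ _ fun b hb => Finset.inf'_le _ (Finset.mem_attach _ ⟨b, hb⟩))
    (Finset.le_inf' _ _ fun o _ => Finset.inf'_le _ o.2)

variable {Ω : Type*} [MeasurableSpace Ω] {μ : Measure Ω} [IsProbabilityMeasure μ]
  {a θ : ℝ} {W : Ω → ℝ}

lemma map_eq_pareto (ha : 0 < a) (hθ : 0 < θ) (hW : Measurable W)
    (h1 : ∀ x, θ ≤ x → (μ {ω | W ω ≤ x}).toReal = 1 - (θ / x) ^ a)
    (h0 : ∀ x, x < θ → μ {ω | W ω ≤ x} = 0) :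
    μ.map W = paretoM a θ := by
  have : IsProbabilityMeasure (μ.map W) := Measure.isProbabilityMeasure_map hW.aemeasurable
  refine Measure.ext_of_Iic _ _ (fun x => ?_)
  rw [Measure.map_apply hW measurableSet_Iic]
  have hpre : W ⁻¹' Set.Iic x = {ω | W ω ≤ x} := rfl
  rcases lt_or_ge x θ with h | h
  · rw [hpre, h0 x h, paretoM_Iic_of_lt h]
  · rw [hpre, paretoM_Iic ha hθ h, ← h1 x h,
      ENNReal.ofReal_toReal (measure_ne_top μ _)]

lemma tail_prob (ha : 0 < a) (hθ : 0 < θ) (hW : Measurable W)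
    (h1 : ∀ x, θ ≤ x → (μ {ω | W ω ≤ x}).toReal = 1 - (θ / x) ^ a)
    {y : ℝ} (hy : θ ≤ y) :
    μ {ω | y < W ω} = ENNReal.ofReal ((θ / y) ^ a) := by
  have hy0 : 0 < y := lt_of_lt_of_le hθ hy
  have hle : (θ / y) ^ a ≤ 1 :=
    Real.rpow_le_one (by positivity) ((div_le_one hy0).2 hy) ha.le
  have hset : {ω | y < W ω} = {ω | W ω ≤ y}ᶜ := by ext ω; simp [not_le]
  have hmeas : MeasurableSet {ω | W ω ≤ y} := measurableSet_le hW measurable_const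
  have hval : μ {ω | W ω ≤ y} = ENNReal.ofReal (1 - (θ / y) ^ a) := by
    rw [← h1 y hy, ENNReal.ofReal_toReal (measure_ne_top μ _)]
  rw [hset, measure_compl hmeas (measure_ne_top μ _), measure_univ, hval,
    ← ENNReal.ofReal_one, ← ENNReal.ofReal_sub _ (by linarith)]
  norm_num

end helpers

theorem measure_all_exceed
    {Ω : Type*} [MeasurableSpace Ω] (μ : Measure Ω) [IsProbabilityMeasure μ]
    {k : ℕ} (α₁ α₂ θ : ℝ) (hα₁ : 0 < α₁) (hα₂ : 0 < α₂) (hθ : 0 < θ)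
    (X : Fin k → Ω → ℝ) (Y : Ω → ℝ)
    (hX : ∀ i, Measurable (X i)) (hY : Measurable Y)
    (hXcdf : ∀ (i : Fin k) (x : ℝ), θ ≤ x →
      (μ {ω | X i ω ≤ x}).toReal = 1 - (θ / x) ^ α₁)
    (hYcdf : ∀ x : ℝ, θ ≤ x → (μ {ω | Y ω ≤ x}).toReal = 1 - (θ / x) ^ α₂)
    (hYcdf0 : ∀ x : ℝ, x < θ → μ {ω | Y ω ≤ x} = 0)
    (hindep : iIndepFun
      (fun o : Option (Fin k) => Option.elim o Y X) μ)
    (S : Finset (Fin k)) :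
    (μ (⋂ i ∈ S, {ω | Y ω < X i ω})).toReal = α₂ / (α₁ * S.card + α₂) := by
  rcases S.eq_empty_or_nonempty with rfl | hS
  · simp [div_self hα₂.ne']
  set m : ℕ := S.card with hm
  have hm1 : 1 ≤ m := Finset.card_pos.2 hS
  set β : ℝ := α₁ * m with hβ
  have hβ0 : 0 < β := by
    have : (1:ℝ) ≤ m := by exact_mod_cast hm1
    positivity
  set Z : Ω → ℝ := fun ω => S.inf' hS fun i => X i ω with hZ
  have hZmeas : Measurable Z := measurable_finset_inf' hS _ hX
  -- the event as a preimage under (Y, Z)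
  have hset : (⋂ i ∈ S, {ω | Y ω < X i ω})
      = (fun ω => (Y ω, Z ω)) ⁻¹' {p : ℝ × ℝ | p.1 < p.2} := by
    ext ω
    simp [hZ, Finset.lt_inf'_iff]
  -- tail of Z
  have hZtail : ∀ y : ℝ, θ ≤ y →
      μ.map Z (Set.Ioi y) = ENNReal.ofReal ((θ / y) ^ β) := by
    intro y hy
    have hy0 : (0:ℝ) < y := lt_of_lt_of_le hθ hy
    rw [Measure.map_apply hZmeas measurableSet_Ioi]
    have hpre : Z ⁻¹' Set.Ioi y
        = ⋂ i ∈ S.map ⟨some, Option.some_injective _⟩,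
            (Option.elim i Y X) ⁻¹' Set.Ioi y := by
      ext ω
      simp [hZ, Finset.lt_inf'_iff, Set.mem_iInter, Finset.mem_map,
        Function.Embedding.coeFn_mk]
    rw [hpre, (iIndepFun_iff_measure_inter_preimage_eq_mul.1 hindep)
      (S.map ⟨some, Option.some_injective _⟩)
      (sets := fun _ => Set.Ioi y) (fun _ _ => measurableSet_Ioi),
      Finset.prod_map]
    simp only [Function.Embedding.coeFn_mk]
    have heach : ∀ i : Fin k,
        μ ((Option.elim (some i) Y X) ⁻¹' Set.Ioi y)
          = ENNReal.ofReal ((θ / y) ^ α₁) := by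
      intro i
      have : (Option.elim (some i) Y X) ⁻¹' Set.Ioi y = {ω | y < X i ω} := rfl
      rw [this]
      exact tail_prob hα₁ hθ (hX i) (hXcdf i) hy
    rw [Finset.prod_congr rfl fun i _ => heach i, Finset.prod_const, ← hm,
      ← ENNReal.ofReal_pow (by positivity)]
    congr 1
    rw [← Real.rpow_natCast ((θ / y) ^ α₁) m, ← Real.rpow_mul (by positivity)]
  -- independence of Y and Z
  have hYZ : IndepFun Y Z μ := by
    have hd : Disjoint ({none} : Finset (Option (Fin k)))
        (S.map ⟨some, Option.some_injective _⟩) := by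
      simp [Finset.disjoint_left]
    have hbase := hindep.indepFun_finset {none} (S.map ⟨some, Option.some_injective _⟩) hd
      (by rintro (_ | i); exacts [hY, hX i])
    set T : Finset (Option (Fin k)) := S.map ⟨some, Option.some_injective _⟩ with hT
    have hTne : T.Nonempty := hS.map
    have hφ : Measurable fun g : ({none} : Finset (Option (Fin k))) → ℝ =>
        g ⟨none, Finset.mem_singleton_self _⟩ := measurable_pi_apply _
    have hψ : Measurable fun g : T → ℝ =>
        T.attach.inf' (Finset.attach_nonempty_iff.2 hTne) fun o => g o :=
      measurable_finset_inf' _ (fun o (g : T → ℝ) => g o) fun o => measurable_pi_apply _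
    have hcomp := hbase.comp hφ hψ
    have hZeq : ((fun g : T → ℝ =>
        T.attach.inf' (Finset.attach_nonempty_iff.2 hTne) fun o => g o) ∘
          fun a (i : T) => (i : Option (Fin k)).elim Y X a) = Z := by
      funext ω
      simp only [Function.comp_apply]
      rw [inf'_attach_eq T hTne (fun o => (Option.elim o Y X) ω)]
      exact inf'_map_option S hS _
    rw [hZeq] at hcomp
    exact hcomp
  -- turn into a product measure computation
  have hprod : μ.map (fun ω => (Y ω, Z ω)) = (μ.map Y).prod (μ.map Z) :=
    (indepFun_iff_map_prod_eq_prod_map_map hY.aemeasurable hZmeas.aemeasurable).1 hYZ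
  have hmeasset : MeasurableSet {p : ℝ × ℝ | p.1 < p.2} :=
    measurableSet_lt measurable_fst measurable_snd
  have hμA : μ (⋂ i ∈ S, {ω | Y ω < X i ω})
      = ∫⁻ y, μ.map Z (Set.Ioi y) ∂(μ.map Y) := by
    rw [hset, ← Measure.map_apply (hY.prodMk hZmeas) hmeasset, hprod,
      Measure.prod_apply hmeasset]
    rfl
  have hYlaw : μ.map Y = paretoM α₂ θ := map_eq_pareto hα₂ hθ hY hYcdf hYcdf0
  have hGmeas : Measurable fun y => μ.map Z (Set.Ioi y) :=
    Antitone.measurable fun y₁ y₂ h => measure_mono (Set.Ioi_subset_Ioi h)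
  have hDmeas : Measurable (paretoD α₂ θ) := by
    unfold paretoD
    exact Measurable.indicator (by measurability) measurableSet_Ioi
  rw [hμA, hYlaw]
  unfold paretoM
  rw [lintegral_withDensity_eq_lintegral_mul volume hDmeas hGmeas]
  have hfun : (fun y => (paretoD α₂ θ * fun y => μ.map Z (Set.Ioi y)) y)
      = Set.indicator (Set.Ioi θ)
          (fun y => ENNReal.ofReal (α₂ * θ ^ α₂ * y ^ (-α₂ - 1)) * μ.map Z (Set.Ioi y)) := by
    funext y
    simp only [Pi.mul_apply, paretoD]
    rcases lt_or_ge θ y with h | h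
    · rw [Set.indicator_of_mem (Set.mem_Ioi.2 h), Set.indicator_of_mem (Set.mem_Ioi.2 h)]
    · rw [Set.indicator_of_notMem (by simpa using h),
        Set.indicator_of_notMem (by simpa using h), zero_mul]
  rw [hfun, lintegral_indicator measurableSet_Ioi]
  have hcongr : ∫⁻ y in Set.Ioi θ,
      ENNReal.ofReal (α₂ * θ ^ α₂ * y ^ (-α₂ - 1)) * μ.map Z (Set.Ioi y)
      = ∫⁻ y in Set.Ioi θ,
          ENNReal.ofReal ((α₂ * θ ^ (α₂ + β)) * y ^ (-(α₂ + β) - 1)) := by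
    refine setLIntegral_congr_fun measurableSet_Ioi (fun y hy => ?_)
    have hy0 : 0 < y := lt_trans hθ hy
    rw [hZtail y (le_of_lt hy), ← ENNReal.ofReal_mul (by positivity)]
    congr 1
    rw [Real.div_rpow hθ.le hy0.le, Real.rpow_add hθ,
      show -(α₂ + β) - 1 = (-α₂ - 1) + (-β) by ring, Real.rpow_add hy0,
      Real.rpow_neg hy0.le]
    field_simp
  rw [hcongr, ← ofReal_integral_eq_lintegral_ofReal
    ((integrableOn_Ioi_rpow_of_lt (by linarith) hθ).const_mul _)
    ((ae_restrict_iff' measurableSet_Ioi).2 (ae_of_all _ fun y hy => by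
      have : (0:ℝ) < y := lt_trans hθ hy
      positivity))]
  rw [integral_const_mul, pareto_tail_integral (by linarith) hθ,
    ENNReal.toReal_ofReal (by positivity)]
  rw [Real.rpow_neg hθ.le]
  have hθab : (0:ℝ) < θ ^ (α₂ + β) := Real.rpow_pos_of_pos hθ _
  field_simp
  ring

theorem count_exceed
    {Ω : Type*} [MeasurableSpace Ω] (μ : Measure Ω) [IsProbabilityMeasure μ]
    (s k : ℕ) (B : Fin k → Set Ω) (hB : ∀ i, MeasurableSet (B i))
    (R : ℕ → ℝ)
    (hR : ∀ V : Finset (Fin k), (μ (⋂ i ∈ V, B i)).toReal = R V.card) :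
    (μ {ω | s ≤ (Finset.univ.filter fun i => ω ∈ B i).card}).toReal
      = ∑ p ∈ Finset.Icc s k, ∑ u ∈ Finset.range (k - p + 1),
          (-1:ℝ)^u * (k.choose p : ℝ) * ((k-p).choose u : ℝ) * R (p + u) := by
  have hVmeas : ∀ V : Finset (Fin k), MeasurableSet (⋂ i ∈ V, B i) := fun V =>
    MeasurableSet.biInter (V : Set (Fin k)).to_countable (fun i _ => hB i)
  have hVCmeas : ∀ V : Finset (Fin k), MeasurableSet (⋂ i ∈ V, (B i)ᶜ) := fun V =>
    MeasurableSet.biInter (V : Set (Fin k)).to_countable (fun i _ => (hB i).compl)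
  -- inclusion-exclusion
  have IE : ∀ (C T : Finset (Fin k)), Disjoint T C →
      (μ ((⋂ i ∈ T, B i) ∩ ⋂ i ∈ C, (B i)ᶜ)).toReal
        = ∑ U ∈ C.powerset, (-1:ℝ)^U.card * (μ (⋂ i ∈ T ∪ U, B i)).toReal := by
    intro C
    induction C using Finset.induction_on with
    | empty => intro T _; simp
    | @insert j C hj ih =>
      intro T hTd
      have hjT : j ∉ T := fun h =>
        (Finset.disjoint_left.1 hTd h (Finset.mem_insert_self _ _))
      have hTd' : Disjoint T C := hTd.mono_right (Finset.subset_insert _ _)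
      have hTd'' : Disjoint (insert j T) C := by
        rw [Finset.disjoint_left]
        intro x hx hxC
        rcases Finset.mem_insert.1 hx with rfl | hx
        · exact hj hxC
        · exact Finset.disjoint_left.1 hTd' hx hxC
      set big := (⋂ i ∈ T, B i) ∩ ⋂ i ∈ C, (B i)ᶜ with hbig
      have hsplit : (μ (big ∩ B j)).toReal + (μ (big \ B j)).toReal = (μ big).toReal := by
        rw [← ENNReal.toReal_add (measure_ne_top μ _) (measure_ne_top μ _),
          measure_inter_add_diff big (hB j)]
      have h1 : big ∩ B j = (⋂ i ∈ insert j T, B i) ∩ ⋂ i ∈ C, (B i)ᶜ := by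
        ext ω
        simp only [hbig, Set.mem_inter_iff, Set.mem_iInter, Finset.mem_insert,
          Set.mem_compl_iff]
        constructor
        · rintro ⟨⟨hT, hC⟩, hj'⟩
          exact ⟨fun i hi => by rcases hi with rfl | hi; exacts [hj', hT i hi], hC⟩
        · rintro ⟨hT, hC⟩
          exact ⟨⟨fun i hi => hT i (Or.inr hi), hC⟩, hT j (Or.inl rfl)⟩
      have h2 : big \ B j = (⋂ i ∈ T, B i) ∩ ⋂ i ∈ insert j C, (B i)ᶜ := by
        ext ω
        simp only [hbig, Set.mem_diff, Set.mem_inter_iff, Set.mem_iInter,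
          Finset.mem_insert, Set.mem_compl_iff]
        constructor
        · rintro ⟨⟨hT, hC⟩, hj'⟩
          exact ⟨hT, fun i hi => by rcases hi with rfl | hi; exacts [hj', hC i hi]⟩
        · rintro ⟨hT, hC⟩
          exact ⟨⟨hT, fun i hi => hC i (Or.inr hi)⟩, hC j (Or.inl rfl)⟩
      have key : (μ ((⋂ i ∈ T, B i) ∩ ⋂ i ∈ insert j C, (B i)ᶜ)).toReal
          = (μ big).toReal - (μ (big ∩ B j)).toReal := by
        rw [← h2]; linarith [hsplit]
      rw [key, h1, ih T hTd', ih (insert j T) hTd'', Finset.sum_powerset_insert hj]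
      have hsum2 : ∑ U ∈ C.powerset, (-1:ℝ)^(insert j U).card
            * (μ (⋂ i ∈ T ∪ insert j U, B i)).toReal
          = -∑ U ∈ C.powerset, (-1:ℝ)^U.card
            * (μ (⋂ i ∈ insert j T ∪ U, B i)).toReal := by
        rw [← Finset.sum_neg_distrib]
        refine Finset.sum_congr rfl fun U hU => ?_
        have hjU : j ∉ U := fun h => hj (Finset.mem_powerset.1 hU h)
        rw [Finset.card_insert_of_notMem hjU,
          show T ∪ insert j U = insert j T ∪ U by
            rw [Finset.union_insert, Finset.insert_union],
          pow_succ]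
        ring
      rw [hsum2]
      ring
  -- the partition events
  set ET : Finset (Fin k) → Set Ω :=
    fun T => (⋂ i ∈ T, B i) ∩ ⋂ i ∈ Tᶜ, (B i)ᶜ with hET
  have hETmeas : ∀ T, MeasurableSet (ET T) := fun T => (hVmeas T).inter (hVCmeas Tᶜ)
  have hmem : ∀ (ω : Ω) (T : Finset (Fin k)),
      ω ∈ ET T ↔ (Finset.univ.filter fun i => ω ∈ B i) = T := by
    intro ω T
    simp only [hET, Set.mem_inter_iff, Set.mem_iInter, Finset.mem_compl,
      Set.mem_compl_iff, Finset.ext_iff, Finset.mem_filter, Finset.mem_univ, true_and]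
    constructor
    · rintro ⟨h1, h2⟩ i
      by_cases hi : i ∈ T
      · exact ⟨fun _ => hi, fun _ => h1 i hi⟩
      · exact ⟨fun hb => absurd hb (h2 i hi), fun h => absurd h hi⟩
    · intro h
      exact ⟨fun i hi => (h i).2 hi, fun i hi hb => hi ((h i).1 hb)⟩
  set F : Finset (Finset (Fin k)) :=
    Finset.univ.powerset.filter (fun T => s ≤ T.card) with hF
  have hpart : {ω | s ≤ (Finset.univ.filter fun i => ω ∈ B i).card}
      = ⋃ T ∈ F, ET T := by
    ext ω
    simp only [Set.mem_setOf_eq, Set.mem_iUnion, exists_prop]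
    constructor
    · intro h
      exact ⟨Finset.univ.filter fun i => ω ∈ B i,
        by simp [hF, Finset.mem_filter, h],
        (hmem ω _).2 rfl⟩
    · rintro ⟨T, hT, hωT⟩
      rw [(hmem ω T).1 hωT]
      exact (Finset.mem_filter.1 hT).2
  have hdisj : (F : Set (Finset (Fin k))).PairwiseDisjoint ET := by
    intro T _ T' _ hne
    rw [Function.onFun, Set.disjoint_left]
    intro ω h1 h2
    exact hne (((hmem ω T).1 h1).symm.trans ((hmem ω T').1 h2))
  rw [hpart, measure_biUnion_finset hdisj (fun T _ => hETmeas T),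
    ENNReal.toReal_sum (fun T _ => measure_ne_top μ _)]
  -- evaluate each piece
  have hpiece : ∀ T : Finset (Fin k), (μ (ET T)).toReal
      = ∑ u ∈ Finset.range (k - T.card + 1),
          ((k - T.card).choose u : ℝ) * ((-1:ℝ)^u * R (T.card + u)) := by
    intro T
    rw [hET]
    rw [IE Tᶜ T (disjoint_compl_right)]
    have : ∀ U ∈ Tᶜ.powerset, (-1:ℝ)^U.card * (μ (⋂ i ∈ T ∪ U, B i)).toReal
        = (-1:ℝ)^U.card * R (T.card + U.card) := by
      intro U hU
      have hdU : Disjoint T U :=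
        (disjoint_compl_right).mono_right (Finset.mem_powerset.1 hU)
      rw [hR, Finset.card_union_of_disjoint hdU]
    rw [Finset.sum_congr rfl this,
      Finset.sum_powerset_apply_card (fun n => (-1:ℝ)^n * R (T.card + n))]
    rw [Finset.card_compl, Fintype.card_fin]
    exact Finset.sum_congr rfl fun u _ => by rw [nsmul_eq_mul]
  rw [Finset.sum_congr rfl fun T _ => hpiece T]
  -- group by cardinality
  rw [hF, Finset.sum_filter]
  rw [Finset.sum_powerset_apply_card
    (fun n => if s ≤ n then ∑ u ∈ Finset.range (k - n + 1),
      ((k - n).choose u : ℝ) * ((-1:ℝ)^u * R (n + u)) else 0)]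
  rw [Finset.card_univ, Fintype.card_fin]
  have hIcc : Finset.Icc s k = (Finset.range (k+1)).filter (fun p => s ≤ p) := by
    ext p
    simp only [Finset.mem_Icc, Finset.mem_filter, Finset.mem_range]
    omega
  rw [hIcc, Finset.sum_filter]
  refine Finset.sum_congr rfl fun p _ => ?_
  by_cases hp : s ≤ p
  · simp only [hp, if_true, smul_ite, smul_zero, Finset.smul_sum]
    refine Finset.sum_congr rfl fun u _ => ?_
    rw [nsmul_eq_mul]
    ring
  · simp [hp]

/-- If `X 0, …, X (k-1)` are i.i.d. Pareto `P(α₁, θ)` strength variables and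
`Y` is an independent Pareto `P(α₂, θ)` stress variable, then the probability that at least
`s` of the `X i` exceed `Y` equals
`∑_{p=s}^{k} ∑_{u=0}^{k-p} (-1)^u C(k,p) C(k-p,u) α₂/(α₁(p+u)+α₂)`,
a quantity not depending on `θ`. -/
theorem pareto_multicomponent_reliability
    {Ω : Type*} [MeasurableSpace Ω] (μ : Measure Ω) [IsProbabilityMeasure μ]
    (s k : ℕ) (hs : 0 < s) (hsk : s ≤ k)
    (α₁ α₂ θ : ℝ) (hα₁ : 0 < α₁) (hα₂ : 0 < α₂) (hθ : 0 < θ)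
    (X : Fin k → Ω → ℝ) (Y : Ω → ℝ)
    (hX : ∀ i, Measurable (X i)) (hY : Measurable Y)
    (hXcdf : ∀ (i : Fin k) (x : ℝ), θ ≤ x →
      (μ {ω | X i ω ≤ x}).toReal = 1 - (θ / x) ^ α₁)
    (hXcdf0 : ∀ (i : Fin k) (x : ℝ), x < θ → μ {ω | X i ω ≤ x} = 0)
    (hYcdf : ∀ x : ℝ, θ ≤ x → (μ {ω | Y ω ≤ x}).toReal = 1 - (θ / x) ^ α₂)
    (hYcdf0 : ∀ x : ℝ, x < θ → μ {ω | Y ω ≤ x} = 0)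
    (hindep : iIndepFun
      (fun o : Option (Fin k) => Option.elim o Y X) μ) :
    (μ {ω | s ≤ (Finset.univ.filter (fun i : Fin k => Y ω < X i ω)).card}).toReal
      = ∑ p ∈ Finset.Icc s k, ∑ u ∈ Finset.range (k - p + 1),
          (-1 : ℝ) ^ u * (k.choose p : ℝ) * ((k - p).choose u : ℝ)
            * (α₂ / (α₁ * ((p : ℝ) + (u : ℝ)) + α₂)) := by
  have hBmeas : ∀ i : Fin k, MeasurableSet {ω | Y ω < X i ω} := fun i =>
    measurableSet_lt hY (hX i)
  have hR : ∀ V : Finset (Fin k),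
      (μ (⋂ i ∈ V, {ω | Y ω < X i ω})).toReal = α₂ / (α₁ * V.card + α₂) := fun V =>
    measure_all_exceed μ α₁ α₂ θ hα₁ hα₂ hθ X Y hX hY hXcdf hYcdf hYcdf0 hindep V
  have hmain := count_exceed μ s k (fun i => {ω | Y ω < X i ω}) hBmeas
    (fun n => α₂ / (α₁ * n + α₂)) hR
  have hsets : {ω | s ≤ (Finset.univ.filter (fun i : Fin k => Y ω < X i ω)).card}
      = {ω | s ≤ (Finset.univ.filter fun i : Fin k =>
          ω ∈ {ω' | Y ω' < X i ω'}).card} := by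
    ext ω
    have hfil : (Finset.univ.filter (fun i : Fin k => Y ω < X i ω))
        = (Finset.univ.filter fun i : Fin k => ω ∈ {ω' | Y ω' < X i ω'}) :=
      Finset.filter_congr fun i _ => Iff.rfl
    simp only [Set.mem_setOf_eq, hfil]
  rw [hsets, hmain]
  refine Finset.sum_congr rfl fun p _ => Finset.sum_congr rfl fun u _ => ?_
  push_cast
  ring
end

section
/- Let $n,m\ge 2$ be integers, $c>0$, and $u_1,u_2>0$ with $0<u_2<u_1/c$. Then $\frac{(n-1)(m-1)}{u_1^{n-1}u_2^{m-1}}\int_{0}^{u_2}\int_{c v_2}^{u_1}(u_1-v_1)^{n-2}(u_2-v_2)^{m-2}\,dv_1\,dv_2 \;=\; \sum_{z=0}^{n-1}(-1)^{z}\frac{\Gamma(m)\Gamma(n)}{\Gamma(m+z)\,\Gamma(n-z)}\left(\frac{c\,u_2}{u_1}\right)^{z}.$ -/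
open Finset intervalIntegral

lemma beta_nat_integral (s : ℝ) (k : ℕ) : ∀ j : ℕ,
    ∫ x in (0:ℝ)..s, x ^ k * (s - x) ^ j
      = s ^ (k + j + 1) * (k.factorial * j.factorial) / (k + j + 1).factorial := by
  induction k with
  | zero =>
    intro j
    simp only [pow_zero, one_mul, Nat.zero_add, Nat.factorial_zero, Nat.cast_one]
    rw [intervalIntegral.integral_comp_sub_left (fun y => y ^ j) s]
    rw [integral_pow]
    have hj : ((j:ℝ) + 1) ≠ 0 := by positivity
    have hjf : ((j.factorial : ℝ)) ≠ 0 := by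
      exact_mod_cast (Nat.factorial_pos j).ne'
    rw [Nat.factorial_succ]
    push_cast
    field_simp
    ring
  | succ k ih =>
    intro j
    have hj : ((j:ℝ) + 1) ≠ 0 := by positivity
    have hu : ∀ x ∈ Set.uIcc (0:ℝ) s,
        HasDerivAt (fun x : ℝ => x ^ (k + 1)) (((k:ℝ) + 1) * x ^ k) x := by
      intro x _
      simpa using hasDerivAt_pow (k + 1) x
    have hv : ∀ x ∈ Set.uIcc (0:ℝ) s,
        HasDerivAt (fun x : ℝ => -((s - x) ^ (j + 1) / ((j:ℝ) + 1))) ((s - x) ^ j) x := by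
      intro x _
      have h1 : HasDerivAt (fun x : ℝ => s - x) (-1) x := (hasDerivAt_id x).const_sub s
      have h2 := (hasDerivAt_pow (j + 1) (s - x)).comp x h1
      have h3 := (h2.div_const ((j:ℝ) + 1)).neg
      convert h3 using 1
      case e'_9 =>
        rw [Nat.add_sub_cancel]; push_cast; field_simp
      all_goals rfl
    have hu' : IntervalIntegrable (fun x : ℝ => ((k:ℝ) + 1) * x ^ k) MeasureTheory.volume 0 s :=
      (by continuity : Continuous fun x : ℝ => ((k:ℝ) + 1) * x ^ k).intervalIntegrable 0 s
    have hv' : IntervalIntegrable (fun x : ℝ => (s - x) ^ j) MeasureTheory.volume 0 s :=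
      (by continuity : Continuous fun x : ℝ => (s - x) ^ j).intervalIntegrable 0 s
    have key := intervalIntegral.integral_mul_deriv_eq_deriv_mul hu hv hu' hv'
    rw [key]
    have hrw : (∫ x in (0:ℝ)..s, (((k:ℝ) + 1) * x ^ k) * (-((s - x) ^ (j + 1) / ((j:ℝ) + 1))))
        = (-(((k:ℝ) + 1) / ((j:ℝ) + 1))) * ∫ x in (0:ℝ)..s, x ^ k * (s - x) ^ (j + 1) := by
      rw [← intervalIntegral.integral_const_mul]
      apply intervalIntegral.integral_congr
      intro x _
      ring
    rw [hrw, ih (j + 1)]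
    have e1 : k + (j + 1) + 1 = k + j + 2 := by ring
    have e2 : (k + 1) + j + 1 = k + j + 2 := by ring
    rw [e1, e2]
    have hf : (((k + j + 2).factorial : ℝ)) ≠ 0 := by
      exact_mod_cast (Nat.factorial_pos _).ne'
    rw [Nat.factorial_succ k, Nat.factorial_succ j]
    push_cast
    field_simp
    ring

/-- For integers `n, m ≥ 2`, `c > 0` and `0 < u₂ < u₁ / c`,
`((n-1)(m-1)/(u₁^(n-1) u₂^(m-1))) ∫₀^{u₂} ∫_{c v₂}^{u₁} (u₁-v₁)^(n-2) (u₂-v₂)^(m-2) dv₁ dv₂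
  = ∑_{z=0}^{n-1} (-1)^z (Γ(m)Γ(n) / (Γ(m+z)Γ(n-z))) (c u₂ / u₁)^z`. -/
theorem umvue_double_integral_case1
    (n m : ℕ) (hn : 2 ≤ n) (hm : 2 ≤ m)
    (c u₁ u₂ : ℝ) (hc : 0 < c) (hu₁ : 0 < u₁) (hu₂ : 0 < u₂)
    (h : u₂ < u₁ / c) :
    ((n : ℝ) - 1) * ((m : ℝ) - 1) / (u₁ ^ (n - 1) * u₂ ^ (m - 1)) *
        ∫ v₂ in (0 : ℝ)..u₂, ∫ v₁ in (c * v₂)..u₁,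
          (u₁ - v₁) ^ (n - 2) * (u₂ - v₂) ^ (m - 2)
      = ∑ z ∈ Finset.range n,
          (-1 : ℝ) ^ z *
            (Real.Gamma (m : ℝ) * Real.Gamma (n : ℝ)
              / (Real.Gamma ((m + z : ℕ) : ℝ) * Real.Gamma ((n - z : ℕ) : ℝ)))
            * (c * u₂ / u₁) ^ z := by
  obtain ⟨n', rfl⟩ : ∃ n', n = n' + 2 := ⟨n - 2, by omega⟩
  obtain ⟨m', rfl⟩ : ∃ m', m = m' + 2 := ⟨m - 2, by omega⟩
  have hn1 : (n' + 2) - 1 = n' + 1 := rfl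
  have hm1 : (m' + 2) - 1 = m' + 1 := rfl
  have hn2 : (n' + 2) - 2 = n' := rfl
  have hm2 : (m' + 2) - 2 = m' := rfl
  rw [hn1, hm1, hn2, hm2]
  have hN : ((n':ℝ) + 1) ≠ 0 := by positivity
  -- inner integral
  have inner : ∀ v₂ : ℝ,
      (∫ v₁ in (c * v₂)..u₁, (u₁ - v₁) ^ n' * (u₂ - v₂) ^ m')
        = (u₁ - c * v₂) ^ (n' + 1) / ((n':ℝ) + 1) * (u₂ - v₂) ^ m' := by
    intro v₂
    rw [intervalIntegral.integral_mul_const]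
    congr 1
    rw [intervalIntegral.integral_comp_sub_left (fun y => y ^ n') u₁]
    rw [integral_pow]
    simp
  -- pointwise expansion of the outer integrand as a finite sum
  have expand : ∀ v₂ : ℝ,
      (u₁ - c * v₂) ^ (n' + 1) / ((n':ℝ) + 1) * (u₂ - v₂) ^ m'
        = ∑ k ∈ Finset.range (n' + 2),
            ((-c) ^ k * u₁ ^ (n' + 1 - k) * ((n' + 1).choose k : ℝ) / ((n':ℝ) + 1))
              * (v₂ ^ k * (u₂ - v₂) ^ m') := by
    intro v₂
    have hbin : (u₁ - c * v₂) ^ (n' + 1)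
        = ∑ k ∈ Finset.range (n' + 2),
            (-(c * v₂)) ^ k * u₁ ^ (n' + 1 - k) * ((n' + 1).choose k : ℝ) := by
      rw [show u₁ - c * v₂ = -(c * v₂) + u₁ by ring]
      exact add_pow _ _ _
    rw [hbin, Finset.sum_div, Finset.sum_mul]
    apply Finset.sum_congr rfl
    intro k _
    rw [show (-(c * v₂)) = (-c) * v₂ by ring, mul_pow]
    ring
  have step1 : (∫ v₂ in (0:ℝ)..u₂, ∫ v₁ in (c * v₂)..u₁, (u₁ - v₁) ^ n' * (u₂ - v₂) ^ m')
      = ∑ k ∈ Finset.range (n' + 2),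
          ((-c) ^ k * u₁ ^ (n' + 1 - k) * ((n' + 1).choose k : ℝ) / ((n':ℝ) + 1))
            * (u₂ ^ (k + m' + 1) * (k.factorial * m'.factorial) / (k + m' + 1).factorial) := by
    rw [intervalIntegral.integral_congr (g := fun v₂ =>
        ∑ k ∈ Finset.range (n' + 2),
          ((-c) ^ k * u₁ ^ (n' + 1 - k) * ((n' + 1).choose k : ℝ) / ((n':ℝ) + 1))
            * (v₂ ^ k * (u₂ - v₂) ^ m'))]
    · rw [intervalIntegral.integral_finset_sum]
      · apply Finset.sum_congr rfl
        intro k _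
        rw [intervalIntegral.integral_const_mul, beta_nat_integral u₂ k m']
      · intro k _
        apply Continuous.intervalIntegrable
        continuity
    · intro v₂ _
      dsimp only
      rw [inner v₂, expand v₂]
  rw [step1, Finset.mul_sum]
  apply Finset.sum_congr rfl
  intro z hz
  have hz' : z ≤ n' + 1 := by
    have := Finset.mem_range.mp hz; omega
  -- Gamma values
  have g1 : Real.Gamma ((m' + 2 : ℕ) : ℝ) = (m' + 1).factorial := by
    rw [show ((m' + 2 : ℕ) : ℝ) = ((m' + 1 : ℕ) : ℝ) + 1 by push_cast; ring,
      Real.Gamma_nat_eq_factorial]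
  have g2 : Real.Gamma ((n' + 2 : ℕ) : ℝ) = (n' + 1).factorial := by
    rw [show ((n' + 2 : ℕ) : ℝ) = ((n' + 1 : ℕ) : ℝ) + 1 by push_cast; ring,
      Real.Gamma_nat_eq_factorial]
  have g3 : Real.Gamma (((m' + 2 + z : ℕ)) : ℝ) = (m' + 1 + z).factorial := by
    rw [show ((m' + 2 + z : ℕ) : ℝ) = ((m' + 1 + z : ℕ) : ℝ) + 1 by push_cast; ring,
      Real.Gamma_nat_eq_factorial]
  have g4 : Real.Gamma (((n' + 2 - z : ℕ)) : ℝ) = (n' + 1 - z).factorial := by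
    rw [show (n' + 2 - z) = (n' + 1 - z) + 1 by omega, Nat.cast_add, Nat.cast_one,
      Real.Gamma_nat_eq_factorial]
  rw [g1, g2, g3, g4]
  have hch : ((n' + 1).choose z : ℝ) = ((n' + 1).factorial : ℝ)
      / (z.factorial * (n' + 1 - z).factorial) := Nat.cast_choose ℝ hz'
  have hpow1 : u₁ ^ (n' + 1) = u₁ ^ (n' + 1 - z) * u₁ ^ z := by
    rw [← pow_add, Nat.sub_add_cancel hz']
  have hpow2 : u₂ ^ (z + m' + 1) = u₂ ^ z * u₂ ^ (m' + 1) := by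
    rw [← pow_add, add_assoc]
  have hfz : ((z.factorial : ℝ)) ≠ 0 := by exact_mod_cast (Nat.factorial_pos _).ne'
  have hfnz : (((n' + 1 - z).factorial : ℝ)) ≠ 0 := by exact_mod_cast (Nat.factorial_pos _).ne'
  have hfm : (((m' + 1 + z).factorial : ℝ)) ≠ 0 := by exact_mod_cast (Nat.factorial_pos _).ne'
  have hfm' : (((m').factorial : ℝ)) ≠ 0 := by exact_mod_cast (Nat.factorial_pos _).ne'
  have hfn1 : (((n' + 1).factorial : ℝ)) ≠ 0 := by exact_mod_cast (Nat.factorial_pos _).ne'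
  have hzm : (z + m' + 1).factorial = (m' + 1 + z).factorial := by congr 1; omega
  have hmf : ((m' + 1).factorial : ℝ) = ((m':ℝ) + 1) * m'.factorial := by
    rw [Nat.factorial_succ]; push_cast; ring
  have hu₁' : u₁ ≠ 0 := hu₁.ne'
  have hu₂' : u₂ ≠ 0 := hu₂.ne'
  rw [hch, hzm, hmf, hpow2]
  push_cast
  rw [div_pow, mul_pow, neg_pow]
  field_simp
  rw [hpow1]
  ring
end

section
/- Let $n,m\ge 2$ be integers, $c>0$, and $u_1,u_2>0$ with $0<u_1/c<u_2$. Then $\frac{(n-1)(m-1)}{u_1^{n-1}u_2^{m-1}}\int_{0}^{u_1/c}\int_{c v_2}^{u_1}(u_1-v_1)^{n-2}(u_2-v_2)^{m-2}\,dv_1\,dv_2 \;=\; \sum_{z=0}^{m-2}(-1)^{z}\frac{\Gamma(m)\Gamma(n)}{\Gamma(n+z+1)\,\Gamma(m-z-1)}\left(\frac{u_1}{c\,u_2}\right)^{z+1}.$ -/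
open Finset intervalIntegral

private lemma umvue_key (M : ℕ) : ∀ (N : ℕ) (a b : ℝ),
    (∫ s in (0:ℝ)..a, (a - s) ^ N * (b - s) ^ M)
      = ∑ z ∈ Finset.range (M + 1),
          (-1 : ℝ) ^ z *
            ((M.factorial : ℝ) * (N.factorial : ℝ)
              / (((M - z).factorial : ℝ) * ((N + 1 + z).factorial : ℝ)))
            * a ^ (N + 1 + z) * b ^ (M - z) := by
  induction M with
  | zero =>
      intro N a b
      have h1 : (∫ s in (0:ℝ)..a, (a - s) ^ N) = a ^ (N + 1) / (N + 1) := by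
        have h2 := intervalIntegral.integral_comp_sub_left (a := (0:ℝ)) (b := a)
          (fun x : ℝ => x ^ N) a
        simp only [sub_self, sub_zero] at h2
        rw [h2, integral_pow]
        simp [zero_pow (Nat.succ_ne_zero N)]
      have hN : ((N : ℝ) + 1) ≠ 0 := by positivity
      have hfN : ((N.factorial : ℝ)) ≠ 0 := Nat.cast_ne_zero.mpr N.factorial_ne_zero
      simp only [pow_zero, mul_one]
      rw [h1]
      simp only [zero_add, Finset.sum_range_one, pow_zero, one_mul, Nat.sub_zero,
        Nat.factorial_zero, Nat.add_zero, Nat.cast_one, mul_one]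
      rw [Nat.factorial_succ]
      push_cast
      field_simp
  | succ M ih =>
      intro N a b
      have hu : ∀ x ∈ Set.uIcc (0:ℝ) a,
          HasDerivAt (fun s : ℝ => (b - s) ^ (M + 1)) (-((M : ℝ) + 1) * (b - x) ^ M) x := by
        intro x _
        have h1 : HasDerivAt (fun s : ℝ => b - s) (-1) x := (hasDerivAt_id x).const_sub b
        have h2 := h1.fun_pow (M + 1)
        refine h2.congr_deriv ?_
        push_cast
        simp [Nat.add_sub_cancel]
        ring
      have hv : ∀ x ∈ Set.uIcc (0:ℝ) a,
          HasDerivAt (fun s : ℝ => -((a - s) ^ (N + 1) / ((N : ℝ) + 1))) ((a - x) ^ N) x := by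
        intro x _
        have h1 : HasDerivAt (fun s : ℝ => a - s) (-1) x := (hasDerivAt_id x).const_sub a
        have h2 := ((h1.fun_pow (N + 1)).div_const ((N : ℝ) + 1)).neg
        have hN : ((N : ℝ) + 1) ≠ 0 := by positivity
        refine h2.congr_deriv ?_
        simp only [Nat.add_sub_cancel]
        push_cast
        field_simp
      have hu' : IntervalIntegrable (fun x : ℝ => -((M : ℝ) + 1) * (b - x) ^ M)
          MeasureTheory.volume 0 a :=
        (Continuous.intervalIntegrable (by continuity) _ _)
      have hv' : IntervalIntegrable (fun x : ℝ => (a - x) ^ N)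
          MeasureTheory.volume 0 a :=
        (Continuous.intervalIntegrable (by continuity) _ _)
      have hIBP := intervalIntegral.integral_mul_deriv_eq_deriv_mul
        (u := fun s : ℝ => (b - s) ^ (M + 1))
        (v := fun s : ℝ => -((a - s) ^ (N + 1) / ((N : ℝ) + 1)))
        (u' := fun s : ℝ => -((M : ℝ) + 1) * (b - s) ^ M)
        (v' := fun s : ℝ => (a - s) ^ N)
        hu hv hu' hv'
      rw [intervalIntegral.integral_congr
        (g := fun s : ℝ => (b - s) ^ (M + 1) * (a - s) ^ N)
        (fun x _ => by ring), hIBP]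
      have hrec : (∫ x in (0:ℝ)..a,
            (-((M : ℝ) + 1) * (b - x) ^ M) * (-((a - x) ^ (N + 1) / ((N : ℝ) + 1))))
          = (((M : ℝ) + 1) / ((N : ℝ) + 1)) *
              ∫ x in (0:ℝ)..a, (a - x) ^ (N + 1) * (b - x) ^ M := by
        rw [← intervalIntegral.integral_const_mul]
        apply intervalIntegral.integral_congr
        intro x _
        field_simp
      rw [hrec, ih (N + 1) a b, Finset.mul_sum]
      have hN : ((N : ℝ) + 1) ≠ 0 := by positivity
      have hsum : ∀ z ∈ Finset.range (M + 1),
          (((M : ℝ) + 1) / ((N : ℝ) + 1)) *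
            ((-1 : ℝ) ^ z *
              ((M.factorial : ℝ) * ((N + 1).factorial : ℝ)
                / (((M - z).factorial : ℝ) * ((N + 1 + 1 + z).factorial : ℝ)))
              * a ^ (N + 1 + 1 + z) * b ^ (M - z))
          = -((-1 : ℝ) ^ (z + 1) *
              (((M + 1).factorial : ℝ) * (N.factorial : ℝ)
                / (((M + 1 - (z + 1)).factorial : ℝ) * ((N + 1 + (z + 1)).factorial : ℝ)))
              * a ^ (N + 1 + (z + 1)) * b ^ (M + 1 - (z + 1))) := by
        intro z hz
        have e1 : N + 1 + 1 + z = N + 1 + (z + 1) := by omega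
        have e2 : M + 1 - (z + 1) = M - z := by omega
        rw [e1, e2]
        have hf1 : (((M - z).factorial : ℝ)) ≠ 0 := Nat.cast_ne_zero.mpr (Nat.factorial_ne_zero _)
        have hf2 : (((N + 1 + (z + 1)).factorial : ℝ)) ≠ 0 :=
          Nat.cast_ne_zero.mpr (Nat.factorial_ne_zero _)
        rw [pow_succ]
        push_cast [Nat.factorial_succ]
        field_simp
      rw [Finset.sum_congr rfl hsum, Finset.sum_neg_distrib]
      conv_rhs => rw [Finset.sum_range_succ']
      have hT0 : ((-1 : ℝ) ^ 0 *
            (((M + 1).factorial : ℝ) * (N.factorial : ℝ)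
              / (((M + 1 - 0).factorial : ℝ) * ((N + 1 + 0).factorial : ℝ)))
            * a ^ (N + 1 + 0) * b ^ (M + 1 - 0))
          = b ^ (M + 1) * (a ^ (N + 1) / ((N : ℝ) + 1)) := by
        have hfM : (((M + 1).factorial : ℝ)) ≠ 0 := Nat.cast_ne_zero.mpr (Nat.factorial_ne_zero _)
        have hfN : ((N.factorial : ℝ)) ≠ 0 := Nat.cast_ne_zero.mpr N.factorial_ne_zero
        simp only [Nat.sub_zero, Nat.add_zero, pow_zero, one_mul]
        push_cast [Nat.factorial_succ]
        field_simp
      rw [hT0]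
      simp only [sub_self, sub_zero, zero_pow (Nat.succ_ne_zero N)]
      ring

/-- For integers `n, m ≥ 2`, `c > 0` and `0 < u₁ / c < u₂`,
`((n-1)(m-1)/(u₁^(n-1) u₂^(m-1))) ∫₀^{u₁/c} ∫_{c v₂}^{u₁} (u₁-v₁)^(n-2) (u₂-v₂)^(m-2) dv₁ dv₂
  = ∑_{z=0}^{m-2} (-1)^z (Γ(m)Γ(n) / (Γ(n+z+1)Γ(m-z-1))) (u₁ / (c u₂))^(z+1)`. -/
theorem umvue_double_integral_case2
    (n m : ℕ) (hn : 2 ≤ n) (hm : 2 ≤ m)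
    (c u₁ u₂ : ℝ) (hc : 0 < c) (hu₁ : 0 < u₁) (hu₂ : 0 < u₂)
    (h : u₁ / c < u₂) :
    ((n : ℝ) - 1) * ((m : ℝ) - 1) / (u₁ ^ (n - 1) * u₂ ^ (m - 1)) *
        ∫ v₂ in (0 : ℝ)..(u₁ / c), ∫ v₁ in (c * v₂)..u₁,
          (u₁ - v₁) ^ (n - 2) * (u₂ - v₂) ^ (m - 2)
      = ∑ z ∈ Finset.range (m - 1),
          (-1 : ℝ) ^ z *
            (Real.Gamma (m : ℝ) * Real.Gamma (n : ℝ)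
              / (Real.Gamma ((n + z + 1 : ℕ) : ℝ) * Real.Gamma ((m - z - 1 : ℕ) : ℝ)))
            * (u₁ / (c * u₂)) ^ (z + 1) := by
  obtain ⟨N, rfl⟩ : ∃ k, n = k + 2 := ⟨n - 2, by omega⟩
  obtain ⟨M, rfl⟩ : ∃ k, m = k + 2 := ⟨m - 2, by omega⟩
  have hc' : c ≠ 0 := ne_of_gt hc
  have hu₁' : u₁ ≠ 0 := ne_of_gt hu₁
  have hu₂' : u₂ ≠ 0 := ne_of_gt hu₂
  have hN1 : ((N : ℝ) + 1) ≠ 0 := by positivity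
  have hN2 : ((N : ℝ) + 2) ≠ 0 := by positivity
  simp only [show N + 2 - 2 = N from by omega, show N + 2 - 1 = N + 1 from by omega,
    show M + 2 - 2 = M from by omega, show M + 2 - 1 = M + 1 from by omega]
  have hinner : ∀ v₂ : ℝ,
      (∫ v₁ in (c * v₂)..u₁, (u₁ - v₁) ^ N * (u₂ - v₂) ^ M)
        = (u₁ - c * v₂) ^ (N + 1) / ((N : ℝ) + 1) * (u₂ - v₂) ^ M := by
    intro v₂
    rw [intervalIntegral.integral_mul_const]
    congr 1
    have h2 := intervalIntegral.integral_comp_sub_left (a := c * v₂) (b := u₁)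
      (fun x : ℝ => x ^ N) u₁
    simp only [sub_self] at h2
    rw [h2, integral_pow]
    simp [zero_pow (Nat.succ_ne_zero N)]
  simp only [hinner]
  have houter : (∫ v₂ in (0:ℝ)..(u₁ / c),
        (u₁ - c * v₂) ^ (N + 1) / ((N : ℝ) + 1) * (u₂ - v₂) ^ M)
      = (c ^ (N + 1) / ((N : ℝ) + 1)) *
          ∫ v₂ in (0:ℝ)..(u₁ / c), (u₁ / c - v₂) ^ (N + 1) * (u₂ - v₂) ^ M := by
    rw [← intervalIntegral.integral_const_mul]
    apply intervalIntegral.integral_congr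
    intro x _
    show (u₁ - c * x) ^ (N + 1) / ((N : ℝ) + 1) * (u₂ - x) ^ M
      = c ^ (N + 1) / ((N : ℝ) + 1) * ((u₁ / c - x) ^ (N + 1) * (u₂ - x) ^ M)
    have hx : u₁ - c * x = c * (u₁ / c - x) := by field_simp
    rw [hx, mul_pow]
    ring
  rw [houter, umvue_key M (N + 1) (u₁ / c) u₂, Finset.mul_sum, Finset.mul_sum]
  apply Finset.sum_congr rfl
  intro z hz
  have hzM : z ≤ M := by
    have := Finset.mem_range.mp hz; omega
  have gm : Real.Gamma ((M + 2 : ℕ) : ℝ) = ((M + 1).factorial : ℝ) := by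
    rw [show ((M + 2 : ℕ) : ℝ) = ((M + 1 : ℕ) : ℝ) + 1 by push_cast; ring,
      Real.Gamma_nat_eq_factorial]
  have gn : Real.Gamma ((N + 2 : ℕ) : ℝ) = ((N + 1).factorial : ℝ) := by
    rw [show ((N + 2 : ℕ) : ℝ) = ((N + 1 : ℕ) : ℝ) + 1 by push_cast; ring,
      Real.Gamma_nat_eq_factorial]
  have gnz : Real.Gamma ((N + 2 + z + 1 : ℕ) : ℝ) = ((N + 2 + z).factorial : ℝ) := by
    rw [show ((N + 2 + z + 1 : ℕ) : ℝ) = ((N + 2 + z : ℕ) : ℝ) + 1 by push_cast; ring,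
      Real.Gamma_nat_eq_factorial]
  have gmz : Real.Gamma ((M + 2 - z - 1 : ℕ) : ℝ) = ((M - z).factorial : ℝ) := by
    rw [show ((M + 2 - z - 1 : ℕ) : ℝ) = ((M - z : ℕ) : ℝ) + 1 by
        rw [show M + 2 - z - 1 = (M - z) + 1 from by omega]; push_cast; ring,
      Real.Gamma_nat_eq_factorial]
  rw [gm, gn, gnz, gmz]
  rw [show N + 1 + 1 + z = N + 2 + z from by omega]
  obtain ⟨w, rfl⟩ : ∃ w, M = z + w := ⟨M - z, by omega⟩
  rw [show z + w - z = w from by omega]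
  have hf1 : ((w.factorial : ℝ)) ≠ 0 := Nat.cast_ne_zero.mpr w.factorial_ne_zero
  have hf2 : (((N + 2 + z).factorial : ℝ)) ≠ 0 := Nat.cast_ne_zero.mpr (Nat.factorial_ne_zero _)
  have hf3 : (((z + w).factorial : ℝ)) ≠ 0 := Nat.cast_ne_zero.mpr (Nat.factorial_ne_zero _)
  have hf4 : (((N + 1).factorial : ℝ)) ≠ 0 := Nat.cast_ne_zero.mpr (Nat.factorial_ne_zero _)
  rw [div_pow, div_pow, mul_pow]
  push_cast [Nat.factorial_succ]
  field_simp
  ring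
end

section
/- Let $n,m\ge 2$ be integers, $c>0$, and $\alpha_1,\alpha_2>0$. Let $U_1,U_2$ be independent random variables with $U_1\sim\mathrm{Gamma}(n,\alpha_1)$ (shape $n$, rate $\alpha_1$) and $U_2\sim\mathrm{Gamma}(m,\alpha_2)$. Define $\varphi_{UM}(u_1,u_2)=\sum_{z=0}^{n-1}(-1)^{z}\frac{\Gamma(m)\Gamma(n)}{\Gamma(m+z)\Gamma(n-z)}\left(\frac{c u_2}{u_1}\right)^{z}$ if $0<u_2<u_1/c$, and $\varphi_{UM}(u_1,u_2)=\sum_{z=0}^{m-2}(-1)^{z}\frac{\Gamma(m)\Gamma(n)}{\Gamma(n+z+1)\Gamma(m-z-1)}\left(\frac{u_1}{c u_2}\right)^{z+1}$ if $0<u_1/c<u_2$. Then $E[\varphi_{UM}(U_1,U_2)]=\dfrac{\alpha_2}{c\,\alpha_1+\alpha_2}$, i.e. $\varphi_{UM}$ is an unbiased estimator of $\varphi(\alpha_1,\alpha_2)=\alpha_2/(c\alpha_1+\alpha_2)$. -/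
open MeasureTheory ProbabilityTheory Finset

/-- The piecewise UMVUE kernel `φ_UM` of `φ(α₁,α₂) = α₂/(c α₁ + α₂)`:
for `0 < u₂ < u₁/c` it is `∑_{z=0}^{n-1} (-1)^z Γ(m)Γ(n)/(Γ(m+z)Γ(n-z)) (c u₂/u₁)^z`,
and for `0 < u₁/c < u₂` it is
`∑_{z=0}^{m-2} (-1)^z Γ(m)Γ(n)/(Γ(n+z+1)Γ(m-z-1)) (u₁/(c u₂))^(z+1)`. -/
noncomputable def varphiUM (n m : ℕ) (c u₁ u₂ : ℝ) : ℝ :=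
  if u₂ < u₁ / c then
    ∑ z ∈ Finset.range n,
      (-1 : ℝ) ^ z *
        (Real.Gamma (m : ℝ) * Real.Gamma (n : ℝ)
          / (Real.Gamma ((m + z : ℕ) : ℝ) * Real.Gamma ((n - z : ℕ) : ℝ)))
        * (c * u₂ / u₁) ^ z
  else
    ∑ z ∈ Finset.range (m - 1),
      (-1 : ℝ) ^ z *
        (Real.Gamma (m : ℝ) * Real.Gamma (n : ℝ)
          / (Real.Gamma ((n + z + 1 : ℕ) : ℝ) * Real.Gamma ((m - z - 1 : ℕ) : ℝ)))
        * (u₁ / (c * u₂)) ^ (z + 1)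


section UMVUEHelpers

open Set Filter Topology
open scoped NNReal ENNReal








/-- Alternating partial binomial sum. -/
lemma alt_choose_sum (N : ℕ) (hN : 1 ≤ N) (k : ℕ) :
    ∑ z ∈ range (k+1), (-1 : ℝ)^z * (N.choose (k - z) : ℝ) = ((N-1).choose k : ℝ) := by
  obtain ⟨N', rfl⟩ := Nat.exists_eq_add_of_le hN
  induction k with
  | zero => simp
  | succ k ih =>
    rw [Finset.sum_range_succ']
    have hshift : ∀ i, (-1:ℝ)^(i+1) * ((1+N').choose (k+1-(i+1)) : ℝ)
        = -((-1:ℝ)^i * ((1+N').choose (k-i) : ℝ)) := by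
      intro i
      have : k + 1 - (i+1) = k - i := by omega
      rw [this, pow_succ]; ring
    calc (∑ i ∈ range (k+1), (-1:ℝ)^(i+1) * ((1+N').choose (k+1-(i+1)) : ℝ))
          + (-1:ℝ)^0 * ((1+N').choose (k+1-0) : ℝ)
        = -∑ i ∈ range (k+1), (-1:ℝ)^i * ((1+N').choose (k-i) : ℝ)
            + ((1+N').choose (k+1):ℝ) := by
          rw [← Finset.sum_neg_distrib]
          congr 1
          · exact Finset.sum_congr rfl fun i _ => hshift i
          · norm_num
      _ = ((1+N'-1).choose (k+1) : ℝ) := by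
          rw [ih]
          have h1 : 1 + N' - 1 = N' := by omega
          have h2 : (1+N').choose (k+1) = N'.choose (k+1) + N'.choose k := by
            rw [Nat.add_comm 1 N', Nat.choose_succ_succ', Nat.add_comm]
          rw [h1, h2]
          push_cast; ring

lemma shift_sum (N : ℕ) (hN : 1 ≤ N) (M : ℕ) (hM : 1 ≤ M) (s : ℝ) :
    (∑ k ∈ range M, ((N+k).choose k : ℝ) * s^k)
      - ∑ k ∈ range M, ((N-1+k).choose k : ℝ) * s^k
    = s * (∑ k ∈ range M, ((N+k).choose k : ℝ) * s^k)
      - ((N+M-1).choose (M-1) : ℝ) * s^M := by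
  induction M, hM using Nat.le_induction with
  | base => simp
  | succ M hM ih =>
    rw [Finset.sum_range_succ, Finset.sum_range_succ]
    have e1 : ((N+M).choose M : ℝ) - ((N-1+M).choose M : ℝ) = ((N+M-1).choose (M-1) : ℝ) := by
      obtain ⟨N', rfl⟩ := Nat.exists_eq_add_of_le hN
      obtain ⟨M', rfl⟩ := Nat.exists_eq_add_of_le hM
      have h1 : 1 + N' + (1 + M') = (N' + (1+M')) + 1 := by omega
      have h2 : 1 + M' = M' + 1 := by omega
      have h3 : 1 + N' - 1 + (1 + M') = N' + (1 + M') := by omega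
      have h4 : 1 + N' + (1+M') - 1 = N' + (1 + M') := by omega
      have h5 : 1 + M' - 1 = M' := by omega
      rw [h3, h4, h5, h1, h2, Nat.choose_succ_succ]
      push_cast
      have : N' + (M' + 1) = N' + (1 + M') := by omega
      rw [this]; ring
    have e2 : N + (M+1) - 1 = N + M := by omega
    have e3 : M + 1 - 1 = M := by omega
    rw [e2, e3]
    linear_combination ih + e1 * s^M

lemma key_identity (N : ℕ) (hN : 1 ≤ N) (M : ℕ) (hM : 1 ≤ M) (s t : ℝ) (hst : s + t = 1) :
    s^M * (∑ k ∈ range N, ((M-1+k).choose k : ℝ) * t^k)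
      + t^N * (∑ k ∈ range M, ((N-1+k).choose k : ℝ) * s^k) = 1 := by
  induction N, hN using Nat.le_induction with
  | base =>
    have h1 : ∑ k ∈ range 1, ((M-1+k).choose k : ℝ) * t^k = 1 := by simp
    have h2 : ∑ k ∈ range M, ((1-1+k).choose k : ℝ) * s^k = ∑ k ∈ range M, s^k := by
      refine Finset.sum_congr rfl fun k _ => by simp
    rw [h1, h2, pow_one, mul_one]
    have hg := geom_sum_mul s M
    linear_combination -hg + (∑ k ∈ range M, s^k) * hst
  | succ N hN ih =>
    have hsh := shift_sum N hN M hM s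
    have e1 : N + 1 - 1 = N := by omega
    rw [e1, Finset.sum_range_succ]
    have e3 : N + M - 1 = M - 1 + N := by omega
    have hchoose : ((N+M-1).choose (M-1) : ℝ) = ((M-1+N).choose N : ℝ) := by
      have h := Nat.choose_symm (Nat.le_add_right (M-1) N)
      have e : M - 1 + N - (M-1) = N := by omega
      rw [e] at h
      rw [e3, ← h]
    linear_combination ih + t^N * hsh - s^M * t^N * hchoose
      + t^N * (∑ k ∈ range M, ((N+k).choose k : ℝ) * s^k) * hst

lemma reindex_sum (n : ℕ) (f : ℕ → ℕ → ℝ) :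
    ∑ z ∈ range n, ∑ j ∈ range (n - z), f z j
      = ∑ k ∈ range n, ∑ z ∈ range (k+1), f z (k - z) := by
  rw [Finset.sum_sigma', Finset.sum_sigma']
  refine Finset.sum_nbij' (fun p => ⟨p.1 + p.2, p.1⟩) (fun p => ⟨p.2, p.1 - p.2⟩) ?_ ?_ ?_ ?_ ?_
  · rintro ⟨z, j⟩ h
    simp only [Finset.mem_sigma, Finset.mem_range] at h ⊢
    omega
  · rintro ⟨k, z⟩ h
    simp only [Finset.mem_sigma, Finset.mem_range] at h ⊢
    omega
  · rintro ⟨z, j⟩ h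
    simp
  · rintro ⟨k, z⟩ h
    simp only [Finset.mem_sigma, Finset.mem_range] at h
    simp only [Sigma.mk.inj_iff]
    constructor
    · omega
    · exact heq_of_eq rfl
  · rintro ⟨z, j⟩ h
    simp

lemma integrableOn_pow_mul_exp {a : ℝ} (ha : 0 < a) (k : ℕ) {x : ℝ} (hx : 0 ≤ x) :
    IntegrableOn (fun u : ℝ => u ^ k * Real.exp (-(a * u))) (Set.Ioi x) := by
  have h := integrableOn_rpow_mul_exp_neg_mul_rpow (p := 1) (s := (k : ℝ)) (b := a)
    (by exact_mod_cast neg_one_lt_zero.trans_le (Nat.cast_nonneg k)) zero_lt_one ha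
  have h2 : IntegrableOn (fun u : ℝ => u ^ k * Real.exp (-(a * u))) (Set.Ioi 0) := by
    refine h.congr_fun (fun u hu => ?_) measurableSet_Ioi
    simp only [Real.rpow_one, Real.rpow_natCast, neg_mul]
  exact h2.mono_set (Set.Ioi_subset_Ioi hx)

lemma poly_deriv_id (k : ℕ) {a : ℝ} (ha : 0 < a) (u : ℝ) :
    a * (∑ j ∈ Finset.range (k+1), ((k.factorial : ℝ) / (j.factorial * a ^ (k+1-j))) * u ^ j)
      - (∑ j ∈ Finset.range (k+1),
          ((k.factorial : ℝ) / (j.factorial * a ^ (k+1-j))) * ((j : ℝ) * u ^ (j-1)))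
    = u ^ k := by
  have hlast : a * (((k.factorial : ℝ) / (k.factorial * a ^ (k+1-k))) * u ^ k) = u ^ k := by
    have h : k + 1 - k = 1 := by omega
    rw [h]
    field_simp
  have hterm : ∀ j ∈ Finset.range k,
      a * (((k.factorial : ℝ) / (j.factorial * a ^ (k+1-j))) * u ^ j)
      = ((k.factorial : ℝ) / ((j+1).factorial * a ^ (k+1-(j+1)))) * (((j+1 : ℕ) : ℝ) * u ^ ((j+1)-1)) := by
    intro j hj
    rw [Finset.mem_range] at hj
    have h1 : k + 1 - j = (k - j) + 1 := by omega
    have h2 : k + 1 - (j+1) = k - j := by omega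
    have h3 : (j + 1) - 1 = j := by omega
    rw [h1, h2, h3, Nat.factorial_succ]
    have hfj : (j.factorial : ℝ) ≠ 0 := by positivity
    have hak : a ^ (k - j) ≠ 0 := by positivity
    push_cast
    field_simp
    ring
  rw [Finset.mul_sum,
    Finset.sum_range_succ (f := fun j => a * (((k.factorial : ℝ) / (j.factorial * a ^ (k+1-j))) * u ^ j)),
    Finset.sum_range_succ' (f := fun j => ((k.factorial : ℝ) / (j.factorial * a ^ (k+1-j))) * ((j : ℝ) * u ^ (j-1))),
    Finset.sum_congr rfl hterm]
  simp only [Nat.cast_zero, zero_mul, mul_zero, add_zero]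
  linear_combination hlast

lemma tendsto_aux (k : ℕ) {a : ℝ} (ha : 0 < a) :
    Tendsto (fun u : ℝ => -Real.exp (-(a*u)) * ∑ j ∈ Finset.range (k+1),
      ((k.factorial : ℝ) / (j.factorial * a ^ (k+1-j))) * u ^ j) atTop (𝓝 0) := by
  have hterm : ∀ j : ℕ, Tendsto (fun u : ℝ => u ^ j * Real.exp (-(a*u))) atTop (𝓝 0) := by
    intro j
    have h1 : Tendsto (fun y : ℝ => y ^ j * Real.exp (-y)) atTop (𝓝 0) :=
      Real.tendsto_pow_mul_exp_neg_atTop_nhds_zero j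
    have h2 : Tendsto (fun u : ℝ => a * u) atTop atTop :=
      tendsto_atTop_atTop_of_monotone (fun x y hxy => by nlinarith)
        (fun b => ⟨b / a, by rw [mul_div_cancel₀]; exact ha.ne'⟩)
    have h3 := h1.comp h2
    have h4 : Tendsto (fun u : ℝ => (1/a)^j * ((a*u)^j * Real.exp (-(a*u)))) atTop (𝓝 ((1/a)^j * 0)) :=
      (h3.const_mul _)
    rw [mul_zero] at h4
    refine h4.congr (fun u => ?_)
    have huu : (1/a) * (a*u) = u := by field_simp
    rw [← mul_assoc, ← mul_pow, huu]
  have : Tendsto (fun u : ℝ => ∑ j ∈ Finset.range (k+1),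
      -(((k.factorial : ℝ) / (j.factorial * a ^ (k+1-j))) * (u ^ j * Real.exp (-(a*u)))))
      atTop (𝓝 (∑ j ∈ Finset.range (k+1), 0)) := by
    refine tendsto_finset_sum _ (fun j _ => ?_)
    have := ((hterm j).const_mul ((k.factorial : ℝ) / (j.factorial * a ^ (k+1-j)))).neg
    simpa using this
  rw [Finset.sum_const, smul_zero] at this
  refine this.congr (fun u => ?_)
  rw [Finset.mul_sum]
  refine Finset.sum_congr rfl fun j _ => by ring

lemma tail_integral (k : ℕ) {a : ℝ} (ha : 0 < a) {x : ℝ} (hx : 0 ≤ x) :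
    ∫ u in Set.Ioi x, u ^ k * Real.exp (-(a * u))
      = Real.exp (-(a*x)) * ∑ j ∈ Finset.range (k+1),
          ((k.factorial : ℝ) / (j.factorial * a ^ (k+1-j))) * x ^ j := by
  have hderiv : ∀ u ∈ Set.Ici x, HasDerivAt (fun u : ℝ => -Real.exp (-(a*u)) * ∑ j ∈ Finset.range (k+1),
      ((k.factorial : ℝ) / (j.factorial * a ^ (k+1-j))) * u ^ j)
      (u ^ k * Real.exp (-(a * u))) u := by
    intro u _
    have h1 : HasDerivAt (fun u : ℝ => -Real.exp (-(a*u))) (a * Real.exp (-(a*u))) u := by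
      have := ((hasDerivAt_id u).const_mul a).neg.exp
      simpa [mul_comm] using this.fun_neg
    have h2 : HasDerivAt (fun u : ℝ => ∑ j ∈ Finset.range (k+1),
        ((k.factorial : ℝ) / (j.factorial * a ^ (k+1-j))) * u ^ j)
        (∑ j ∈ Finset.range (k+1),
          ((k.factorial : ℝ) / (j.factorial * a ^ (k+1-j))) * ((j:ℝ) * u ^ (j-1))) u := by
      refine HasDerivAt.fun_sum (fun j _ => ?_)
      exact (hasDerivAt_pow j u).const_mul _
    have h3 := h1.fun_mul h2
    refine h3.congr_deriv (Eq.symm ?_)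
    have hpid := poly_deriv_id k ha u
    linear_combination (-Real.exp (-(a*u))) * hpid
  have := integral_Ioi_of_hasDerivAt_of_tendsto' hderiv
    (integrableOn_pow_mul_exp ha k hx) (tendsto_aux k ha)
  rw [this]
  ring

lemma moment_integral (k : ℕ) {a : ℝ} (ha : 0 < a) :
    ∫ u in Set.Ioi (0:ℝ), u ^ k * Real.exp (-(a * u)) = (k.factorial : ℝ) / a ^ (k+1) := by
  rw [tail_integral k ha le_rfl]
  rw [Finset.sum_eq_single 0]
  · simp
  · intro j _ hj
    rw [zero_pow hj, mul_zero]
  · intro h; simp at h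

lemma integral_gammaMeasure (n : ℕ) (hn : 2 ≤ n) {a : ℝ} (ha : 0 < a) (g : ℝ → ℝ) :
    ∫ u, g u ∂(gammaMeasure (n:ℝ) a)
      = ∫ u in Set.Ioi (0:ℝ), (a^n / (n-1).factorial * (u^(n-1) * Real.exp (-(a*u)))) * g u := by
  rw [gammaMeasure]
  have hpdf : gammaPDF (n:ℝ) a = fun x => ((Real.toNNReal (gammaPDFReal (n:ℝ) a x) : ℝ≥0) : ℝ≥0∞) := by
    funext x; rw [gammaPDF]; rfl
  rw [hpdf, integral_withDensity_eq_integral_smul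
    ((measurable_gammaPDFReal (n:ℝ) a).real_toNNReal) g]
  have hstep : ∀ u : ℝ, (Real.toNNReal (gammaPDFReal (n:ℝ) a u) : ℝ≥0) • g u
      = gammaPDFReal (n:ℝ) a u * g u := by
    intro u
    rw [NNReal.smul_def, smul_eq_mul, Real.coe_toNNReal _ (gammaPDFReal_nonneg (by positivity) ha u)]
  simp_rw [hstep]
  rw [← setIntegral_eq_integral_of_forall_compl_eq_zero (s := Set.Ioi (0:ℝ))]
  · refine setIntegral_congr_fun measurableSet_Ioi (fun u hu => ?_)
    rw [Set.mem_Ioi] at hu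
    rw [gammaPDFReal, if_pos hu.le]
    have hcast : (n:ℝ) - 1 = ((n - 1 : ℕ) : ℝ) := by
      have : (1:ℝ) ≤ (n:ℝ) := by exact_mod_cast Nat.one_le_of_lt hn
      push_cast [Nat.cast_sub (by omega : 1 ≤ n)]; ring
    rw [hcast, Real.rpow_natCast]
    have hGamma : Real.Gamma (n:ℝ) = ((n-1).factorial : ℝ) := by
      have h1 : (n : ℝ) = ((n-1 : ℕ) : ℝ) + 1 := by
        push_cast [Nat.cast_sub (by omega : 1 ≤ n)]; ring
      rw [h1, Real.Gamma_nat_eq_factorial]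
    rw [hGamma, Real.rpow_natCast]
    ring
  · intro u hu
    rw [Set.mem_Ioi, not_lt] at hu
    rcases lt_or_eq_of_le hu with h | h
    · rw [gammaPDFReal, if_neg (not_le.mpr h), zero_mul]
    · subst h
      rw [gammaPDFReal, if_pos le_rfl]
      rw [Real.zero_rpow (by
        have : (2:ℝ) ≤ (n:ℝ) := by exact_mod_cast hn
        intro hh
        nlinarith)]
      ring

lemma gamma_Iic_zero (a r : ℝ) : gammaMeasure a r (Set.Iic 0) = 0 := by
  rw [gammaMeasure, withDensity_apply _ measurableSet_Iic,
    setLIntegral_congr (Iio_ae_eq_Iic (a := (0:ℝ))).symm]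
  exact lintegral_gammaPDF_of_nonpos le_rfl

lemma ae_pos_prod (n m a b : ℝ) (hn : 0 < n) (hm : 0 < m) (ha : 0 < a) (hb : 0 < b) :
    ∀ᵐ p : ℝ×ℝ ∂((gammaMeasure n a).prod (gammaMeasure m b)), 0 < p.1 ∧ 0 < p.2 := by
  haveI := isProbabilityMeasure_gammaMeasure hn ha
  haveI := isProbabilityMeasure_gammaMeasure hm hb
  have h : ((gammaMeasure n a).prod (gammaMeasure m b))
      ((Set.Iic 0 ×ˢ (Set.univ : Set ℝ)) ∪ ((Set.univ : Set ℝ) ×ˢ Set.Iic 0)) = 0 := by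
    refine measure_union_null ?_ ?_
    · rw [Measure.prod_prod, gamma_Iic_zero, zero_mul]
    · rw [Measure.prod_prod, gamma_Iic_zero, mul_zero]
  refine ae_iff.mpr (measure_mono_null ?_ h)
  intro p hp
  simp only [Set.mem_setOf_eq, not_and_or, not_lt] at hp
  rcases hp with h1 | h2
  · exact Or.inl ⟨h1, Set.mem_univ _⟩
  · exact Or.inr ⟨Set.mem_univ _, h2⟩

lemma J1_eval (n m : ℕ) (hn : 2 ≤ n) (hm : 2 ≤ m) (z : ℕ) (hz : z < n)
    {a b c : ℝ} (ha : 0 < a) (hb : 0 < b) (hc : 0 < c) :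
    ∫ p : ℝ × ℝ, (if c * p.2 < p.1 then (c * p.2 / p.1)^z else 0)
        ∂((gammaMeasure (n:ℝ) a).prod (gammaMeasure (m:ℝ) b))
    = ((n-1-z).factorial : ℝ) / ((n-1).factorial : ℝ)
        * ∑ j ∈ Finset.range (n - z),
            ((((m-1+z+j).factorial : ℝ)) / (((m-1).factorial : ℝ) * (j.factorial : ℝ)))
            * (a*c/(a*c+b))^(z+j) * (b/(a*c+b))^m := by
  haveI hP1 : IsProbabilityMeasure (gammaMeasure (n:ℝ) a) :=
    isProbabilityMeasure_gammaMeasure (by positivity) ha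
  haveI hP2 : IsProbabilityMeasure (gammaMeasure (m:ℝ) b) :=
    isProbabilityMeasure_gammaMeasure (by positivity) hb
  set ν := (gammaMeasure (n:ℝ) a).prod (gammaMeasure (m:ℝ) b) with hν
  set f : ℝ × ℝ → ℝ := fun p => if c * p.2 < p.1 then (c * p.2 / p.1)^z else 0 with hf
  have hmeas : Measurable f := by
    refine Measurable.ite (measurableSet_lt (measurable_snd.const_mul c) measurable_fst) ?_
      measurable_const
    exact ((measurable_snd.const_mul c).div measurable_fst).pow_const z
  have hint : Integrable f ν := by
    refine Integrable.mono' (integrable_const (1:ℝ)) hmeas.aestronglyMeasurable ?_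
    filter_upwards [ae_pos_prod (n:ℝ) (m:ℝ) a b (by positivity) (by positivity) ha hb] with p hp
    rcases hp with ⟨hp1, hp2⟩
    show ‖if c * p.2 < p.1 then (c * p.2 / p.1)^z else 0‖ ≤ 1
    by_cases hcond : c * p.2 < p.1
    · rw [if_pos hcond, Real.norm_eq_abs, abs_pow]
      refine pow_le_one₀ (abs_nonneg _) ?_
      rw [abs_div, abs_of_pos (by positivity), abs_of_pos (lt_trans (by positivity) hcond)]
      rw [div_le_one (lt_trans (by positivity) hcond)]
      exact hcond.le
    · rw [if_neg hcond]; simp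
  rw [MeasureTheory.integral_prod_symm f hint]
  rw [integral_gammaMeasure m hm hb]
  -- inner integral evaluation for u2 > 0
  have hk1 : n - 1 - z + 1 = n - z := by omega
  have hinner : ∀ u2 : ℝ, 0 < u2 →
      (∫ u1, f (u1, u2) ∂(gammaMeasure (n:ℝ) a))
        = (a^n / (n-1).factorial) * (c*u2)^z
          * (Real.exp (-(a*(c*u2))) * ∑ j ∈ Finset.range (n - z),
              (((n-1-z).factorial : ℝ) / (j.factorial * a ^ (n-z-j))) * (c*u2) ^ j) := by
    intro u2 hu2
    rw [integral_gammaMeasure n hn ha]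
    have hcu2 : 0 < c * u2 := by positivity
    have hpoint : ∀ u1 ∈ Set.Ioi (0:ℝ),
        (a^n / (n-1).factorial * (u1^(n-1) * Real.exp (-(a*u1)))) * f (u1, u2)
        = Set.indicator (Set.Ioi (c*u2))
            (fun u1 => (a^n / (n-1).factorial * (c*u2)^z) * (u1^(n-1-z) * Real.exp (-(a*u1)))) u1 := by
      intro u1 hu1
      rw [Set.mem_Ioi] at hu1
      by_cases hcond : c * u2 < u1
      · rw [Set.indicator_of_mem (Set.mem_Ioi.mpr hcond), hf]
        simp only [if_pos hcond]
        have hpow : u1 ^ (n-1-z) = u1 ^ (n-1) / u1 ^ z := by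
          rw [pow_sub₀ u1 (ne_of_gt hu1) (by omega), div_eq_mul_inv]
        rw [hpow, div_pow]
        field_simp
      · rw [Set.indicator_of_notMem (by simpa using hcond), hf]
        simp only [if_neg hcond, mul_zero]
    rw [setIntegral_congr_fun measurableSet_Ioi hpoint,
      MeasureTheory.setIntegral_indicator measurableSet_Ioi]
    have hinter : Set.Ioi (0:ℝ) ∩ Set.Ioi (c*u2) = Set.Ioi (c*u2) := by
      rw [Set.Ioi_inter_Ioi, max_eq_right hcu2.le]
    rw [hinter, integral_const_mul, tail_integral (n-1-z) ha hcu2.le, hk1]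
  -- rewrite the outer integrand as an explicit finite sum
  have houter : ∀ u2 ∈ Set.Ioi (0:ℝ),
      (b^m / (m-1).factorial * (u2^(m-1) * Real.exp (-(b*u2))))
          * (∫ u1, f (u1, u2) ∂(gammaMeasure (n:ℝ) a))
      = ∑ j ∈ Finset.range (n - z),
          ((b^m / (m-1).factorial) * (a^n / (n-1).factorial)
              * (((n-1-z).factorial : ℝ) / (j.factorial * a ^ (n-z-j))) * c^(z+j))
            * (u2 ^ (m-1+z+j) * Real.exp (-((b + a*c) * u2))) := by
    intro u2 hu2
    rw [Set.mem_Ioi] at hu2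
    rw [hinner u2 hu2]
    simp only [Finset.mul_sum]
    refine Finset.sum_congr rfl fun j hj => ?_
    have hexp : Real.exp (-(b*u2)) * Real.exp (-(a*(c*u2))) = Real.exp (-((b + a*c) * u2)) := by
      rw [← Real.exp_add]; ring_nf
    have hp1 : (c*u2)^z = c^z * u2^z := by rw [mul_pow]
    have hp2 : (c*u2)^j = c^j * u2^j := by rw [mul_pow]
    have hpow : u2^(m-1) * u2^z * u2^j = u2^(m-1+z+j) := by
      rw [← pow_add, ← pow_add]
    have hc2 : c^z * c^j = c^(z+j) := by rw [← pow_add]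
    calc (b^m / (m-1).factorial * (u2^(m-1) * Real.exp (-(b*u2))))
          * ((a^n / (n-1).factorial) * (c*u2)^z
            * (Real.exp (-(a*(c*u2))) * ((((n-1-z).factorial : ℝ) / (j.factorial * a ^ (n-z-j))) * (c*u2) ^ j)))
        = ((b^m / (m-1).factorial) * (a^n / (n-1).factorial)
              * (((n-1-z).factorial : ℝ) / (j.factorial * a ^ (n-z-j))) * (c^z * c^j))
            * ((u2^(m-1) * u2^z * u2^j) * (Real.exp (-(b*u2)) * Real.exp (-(a*(c*u2))))) := by
          rw [hp1, hp2]; ring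
      _ = _ := by rw [hexp, hpow, hc2]
  rw [setIntegral_congr_fun measurableSet_Ioi houter]
  rw [MeasureTheory.integral_finset_sum]
  swap
  · intro j hj
    exact (integrableOn_pow_mul_exp (by positivity : (0:ℝ) < b + a*c) (m-1+z+j) le_rfl).const_mul _
  rw [Finset.mul_sum]
  refine Finset.sum_congr rfl fun j hj => ?_
  rw [Finset.mem_range] at hj
  rw [integral_const_mul, moment_integral (m-1+z+j) (by positivity : (0:ℝ) < b + a*c)]
  -- final algebra
  have hfact1 : (0:ℝ) < ((n-1).factorial : ℝ) := by positivity
  have hfact2 : (0:ℝ) < ((m-1).factorial : ℝ) := by positivity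
  have hfact3 : (0:ℝ) < (j.factorial : ℝ) := by positivity
  have hab : (0:ℝ) < a*c + b := by positivity
  have hsplit1 : a^n = a^(z+j) * a^(n-z-j) := by rw [← pow_add]; congr 1; omega
  have hsplit2 : (a*c+b)^(m-1+z+j+1) = (a*c+b)^(z+j) * (a*c+b)^m := by
    rw [← pow_add]; congr 1; omega
  have hba : b + a*c = a*c + b := by ring
  rw [hba, hsplit2, hsplit1]
  rw [div_pow, div_pow]
  field_simp
  ring

lemma J2_eval (n m : ℕ) (hn : 2 ≤ n) (hm : 2 ≤ m) (z : ℕ) (hz : z < m - 1)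
    {a b c : ℝ} (ha : 0 < a) (hb : 0 < b) (hc : 0 < c) :
    ∫ p : ℝ × ℝ, (if c * p.2 < p.1 then 0 else (p.1 / (c * p.2))^(z+1))
        ∂((gammaMeasure (n:ℝ) a).prod (gammaMeasure (m:ℝ) b))
    = ((m-2-z).factorial : ℝ) / ((m-1).factorial : ℝ)
        * ∑ j ∈ Finset.range (m-1-z),
            (((n+z+j).factorial : ℝ) / (((n-1).factorial : ℝ) * (j.factorial : ℝ)))
            * (a*c/(a*c+b))^n * (b/(a*c+b))^(z+1+j) := by
  haveI hP1 : IsProbabilityMeasure (gammaMeasure (n:ℝ) a) :=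
    isProbabilityMeasure_gammaMeasure (by positivity) ha
  haveI hP2 : IsProbabilityMeasure (gammaMeasure (m:ℝ) b) :=
    isProbabilityMeasure_gammaMeasure (by positivity) hb
  set f : ℝ × ℝ → ℝ := fun p => if c * p.2 < p.1 then 0 else (p.1 / (c * p.2))^(z+1) with hf
  have hmeas : Measurable f := by
    refine Measurable.ite (measurableSet_lt (measurable_snd.const_mul c) measurable_fst)
      measurable_const ?_
    exact (measurable_fst.div (measurable_snd.const_mul c)).pow_const (z+1)
  have hint : Integrable f ((gammaMeasure (n:ℝ) a).prod (gammaMeasure (m:ℝ) b)) := by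
    refine Integrable.mono' (integrable_const (1:ℝ)) hmeas.aestronglyMeasurable ?_
    filter_upwards [ae_pos_prod (n:ℝ) (m:ℝ) a b (by positivity) (by positivity) ha hb] with p hp
    rcases hp with ⟨hp1, hp2⟩
    show ‖if c * p.2 < p.1 then 0 else (p.1 / (c * p.2))^(z+1)‖ ≤ 1
    by_cases hcond : c * p.2 < p.1
    · rw [if_pos hcond]; simp
    · rw [if_neg hcond, Real.norm_eq_abs, abs_pow]
      refine pow_le_one₀ (abs_nonneg _) ?_
      rw [not_lt] at hcond
      rw [abs_div, abs_of_pos hp1, abs_of_pos (by positivity)]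
      rw [div_le_one (by positivity)]
      exact hcond
  rw [MeasureTheory.integral_prod f hint]
  rw [integral_gammaMeasure n hn ha]
  have hk2 : m - 2 - z + 1 = m - 1 - z := by omega
  have hinner : ∀ u1 : ℝ, 0 < u1 →
      (∫ u2, f (u1, u2) ∂(gammaMeasure (m:ℝ) b))
        = (b^m / (m-1).factorial) * (u1/c)^(z+1)
          * (Real.exp (-(b*(u1/c))) * ∑ j ∈ Finset.range (m-1-z),
              (((m-2-z).factorial : ℝ) / (j.factorial * b ^ (m-1-z-j))) * (u1/c) ^ j) := by
    intro u1 hu1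
    rw [integral_gammaMeasure m hm hb]
    have hx : 0 < u1 / c := by positivity
    have hpoint : ∀ u2 ∈ Set.Ioi (0:ℝ),
        (b^m / (m-1).factorial * (u2^(m-1) * Real.exp (-(b*u2)))) * f (u1, u2)
        = Set.indicator (Set.Ici (u1/c))
            (fun u2 => (b^m / (m-1).factorial * (u1/c)^(z+1)) * (u2^(m-2-z) * Real.exp (-(b*u2)))) u2 := by
      intro u2 hu2
      rw [Set.mem_Ioi] at hu2
      by_cases hcond : c * u2 < u1
      · have hnot : u2 ∉ Set.Ici (u1/c) := by
          rw [Set.mem_Ici, not_le, lt_div_iff₀ hc, mul_comm u2 c]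
          exact hcond
        rw [Set.indicator_of_notMem hnot, hf]
        simp only [if_pos hcond, mul_zero]
      · have hmem : u2 ∈ Set.Ici (u1/c) := by
          rw [Set.mem_Ici, div_le_iff₀ hc, mul_comm u2 c]
          exact not_lt.mp hcond
        rw [Set.indicator_of_mem hmem, hf]
        simp only [if_neg hcond]
        have hratio : u1 / (c * u2) = (u1/c) / u2 := by
          rw [div_div]
        have hpow : u2 ^ (m-2-z) = u2 ^ (m-1) / u2 ^ (z+1) := by
          have he : m-2-z = (m-1)-(z+1) := by omega
          rw [he, pow_sub₀ u2 (ne_of_gt hu2) (by omega : z+1 ≤ m-1), div_eq_mul_inv]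
        rw [hratio, div_pow, hpow]
        field_simp
    rw [setIntegral_congr_fun measurableSet_Ioi hpoint,
      MeasureTheory.setIntegral_indicator measurableSet_Ici]
    have hinter : Set.Ioi (0:ℝ) ∩ Set.Ici (u1/c) = Set.Ici (u1/c) := by
      refine Set.inter_eq_self_of_subset_right (fun x hx2 => ?_)
      rw [Set.mem_Ici] at hx2
      exact lt_of_lt_of_le hx hx2
    rw [hinter, MeasureTheory.integral_Ici_eq_integral_Ioi, integral_const_mul,
      tail_integral (m-2-z) hb hx.le, hk2]
  have houter : ∀ u1 ∈ Set.Ioi (0:ℝ),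
      (a^n / (n-1).factorial * (u1^(n-1) * Real.exp (-(a*u1))))
          * (∫ u2, f (u1, u2) ∂(gammaMeasure (m:ℝ) b))
      = ∑ j ∈ Finset.range (m-1-z),
          ((a^n / (n-1).factorial) * (b^m / (m-1).factorial)
              * (((m-2-z).factorial : ℝ) / (j.factorial * b ^ (m-1-z-j))) / c^(z+1+j))
            * (u1 ^ (n+z+j) * Real.exp (-((a + b/c) * u1))) := by
    intro u1 hu1
    rw [Set.mem_Ioi] at hu1
    rw [hinner u1 hu1]
    simp only [Finset.mul_sum]
    refine Finset.sum_congr rfl fun j hj => ?_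
    have hexp : Real.exp (-(a*u1)) * Real.exp (-(b*(u1/c))) = Real.exp (-((a + b/c) * u1)) := by
      rw [← Real.exp_add]
      congr 1
      field_simp
      ring
    have hp1 : (u1/c)^(z+1) = u1^(z+1) / c^(z+1) := by rw [div_pow]
    have hp2 : (u1/c)^j = u1^j / c^j := by rw [div_pow]
    have hpow : u1^(n-1) * u1^(z+1) * u1^j = u1^(n+z+j) := by
      rw [← pow_add, ← pow_add]; congr 1; omega
    have hcc : c^(z+1) * c^j = c^(z+1+j) := by rw [← pow_add]
    calc (a^n / (n-1).factorial * (u1^(n-1) * Real.exp (-(a*u1))))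
          * ((b^m / (m-1).factorial) * (u1/c)^(z+1)
            * (Real.exp (-(b*(u1/c))) * ((((m-2-z).factorial : ℝ) / (j.factorial * b ^ (m-1-z-j))) * (u1/c) ^ j)))
        = ((a^n / (n-1).factorial) * (b^m / (m-1).factorial)
              * (((m-2-z).factorial : ℝ) / (j.factorial * b ^ (m-1-z-j))) / (c^(z+1) * c^j))
            * ((u1^(n-1) * u1^(z+1) * u1^j) * (Real.exp (-(a*u1)) * Real.exp (-(b*(u1/c))))) := by
          rw [hp1, hp2]
          field_simp
          try ring
      _ = _ := by rw [hexp, hpow, hcc]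
  rw [setIntegral_congr_fun measurableSet_Ioi houter]
  rw [MeasureTheory.integral_finset_sum]
  swap
  · intro j hj
    exact (integrableOn_pow_mul_exp (by positivity : (0:ℝ) < a + b/c) (n+z+j) le_rfl).const_mul _
  rw [Finset.mul_sum]
  refine Finset.sum_congr rfl fun j hj => ?_
  rw [Finset.mem_range] at hj
  rw [integral_const_mul, moment_integral (n+z+j) (by positivity : (0:ℝ) < a + b/c)]
  have hab : (0:ℝ) < a*c + b := by positivity
  have hsplitb : b^m = b^(z+1+j) * b^(m-1-z-j) := by rw [← pow_add]; congr 1; omega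
  have hacb : a + b/c = (a*c+b)/c := by field_simp
  have hsplit2 : (a*c+b)^(n+z+j+1) = (a*c+b)^n * (a*c+b)^(z+1+j) := by
    rw [← pow_add]; congr 1; omega
  have hsplitc : c^(n+z+j+1) = c^n * c^(z+1+j) := by rw [← pow_add]; congr 1; omega
  rw [hacb, div_pow, hsplit2, hsplitc, hsplitb]
  rw [div_pow, div_pow, mul_pow]
  field_simp



lemma Gamma_natCast (k : ℕ) (hk : 1 ≤ k) :
    Real.Gamma ((k : ℕ) : ℝ) = ((k-1).factorial : ℝ) := by
  have h1 : ((k : ℕ) : ℝ) = ((k-1 : ℕ) : ℝ) + 1 := by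
    push_cast [Nat.cast_sub hk]; ring
  rw [h1, Real.Gamma_nat_eq_factorial]

lemma measurable_varphi (n m : ℕ) (c : ℝ) :
    Measurable (fun p : ℝ × ℝ => varphiUM n m c p.1 p.2) := by
  unfold varphiUM
  refine Measurable.ite (measurableSet_lt measurable_snd (measurable_fst.div_const c)) ?_ ?_
  · refine Finset.measurable_sum _ (fun z _ => ?_)
    exact (((measurable_snd.const_mul c).div measurable_fst).pow_const z).const_mul _
  · refine Finset.measurable_sum _ (fun z _ => ?_)
    exact ((measurable_fst.div (measurable_snd.const_mul c)).pow_const (z+1)).const_mul _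

lemma integrable_g1 (n m : ℕ) (hn : 2 ≤ n) (hm : 2 ≤ m) (z : ℕ)
    {a b c : ℝ} (ha : 0 < a) (hb : 0 < b) (hc : 0 < c) :
    Integrable (fun p : ℝ × ℝ => if c * p.2 < p.1 then (c * p.2 / p.1)^z else 0)
      ((gammaMeasure (n:ℝ) a).prod (gammaMeasure (m:ℝ) b)) := by
  haveI hP1 : IsProbabilityMeasure (gammaMeasure (n:ℝ) a) :=
    isProbabilityMeasure_gammaMeasure (by positivity) ha
  haveI hP2 : IsProbabilityMeasure (gammaMeasure (m:ℝ) b) :=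
    isProbabilityMeasure_gammaMeasure (by positivity) hb
  have hmeas : Measurable (fun p : ℝ × ℝ => if c * p.2 < p.1 then (c * p.2 / p.1)^z else 0) := by
    refine Measurable.ite (measurableSet_lt (measurable_snd.const_mul c) measurable_fst) ?_
      measurable_const
    exact ((measurable_snd.const_mul c).div measurable_fst).pow_const z
  refine Integrable.mono' (integrable_const (1:ℝ)) hmeas.aestronglyMeasurable ?_
  filter_upwards [ae_pos_prod (n:ℝ) (m:ℝ) a b (by positivity) (by positivity) ha hb] with p hp
  rcases hp with ⟨hp1, hp2⟩
  show ‖if c * p.2 < p.1 then (c * p.2 / p.1)^z else 0‖ ≤ 1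
  by_cases hcond : c * p.2 < p.1
  · rw [if_pos hcond, Real.norm_eq_abs, abs_pow]
    refine pow_le_one₀ (abs_nonneg _) ?_
    rw [abs_div, abs_of_pos (by positivity), abs_of_pos (lt_trans (by positivity) hcond)]
    rw [div_le_one (lt_trans (by positivity) hcond)]
    exact hcond.le
  · rw [if_neg hcond]; simp

lemma integrable_g2 (n m : ℕ) (hn : 2 ≤ n) (hm : 2 ≤ m) (z : ℕ)
    {a b c : ℝ} (ha : 0 < a) (hb : 0 < b) (hc : 0 < c) :
    Integrable (fun p : ℝ × ℝ => if c * p.2 < p.1 then 0 else (p.1 / (c * p.2))^(z+1))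
      ((gammaMeasure (n:ℝ) a).prod (gammaMeasure (m:ℝ) b)) := by
  haveI hP1 : IsProbabilityMeasure (gammaMeasure (n:ℝ) a) :=
    isProbabilityMeasure_gammaMeasure (by positivity) ha
  haveI hP2 : IsProbabilityMeasure (gammaMeasure (m:ℝ) b) :=
    isProbabilityMeasure_gammaMeasure (by positivity) hb
  have hmeas : Measurable (fun p : ℝ × ℝ => if c * p.2 < p.1 then 0 else (p.1 / (c * p.2))^(z+1)) := by
    refine Measurable.ite (measurableSet_lt (measurable_snd.const_mul c) measurable_fst)
      measurable_const ?_
    exact (measurable_fst.div (measurable_snd.const_mul c)).pow_const (z+1)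
  refine Integrable.mono' (integrable_const (1:ℝ)) hmeas.aestronglyMeasurable ?_
  filter_upwards [ae_pos_prod (n:ℝ) (m:ℝ) a b (by positivity) (by positivity) ha hb] with p hp
  rcases hp with ⟨hp1, hp2⟩
  show ‖if c * p.2 < p.1 then 0 else (p.1 / (c * p.2))^(z+1)‖ ≤ 1
  by_cases hcond : c * p.2 < p.1
  · rw [if_pos hcond]; simp
  · rw [if_neg hcond, Real.norm_eq_abs, abs_pow]
    refine pow_le_one₀ (abs_nonneg _) ?_
    rw [not_lt] at hcond
    rw [abs_div, abs_of_pos hp1, abs_of_pos (by positivity)]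
    rw [div_le_one (by positivity)]
    exact hcond

lemma sum_one (n m : ℕ) (hn : 2 ≤ n) (hm : 2 ≤ m) (t s : ℝ) :
    ∑ z ∈ range n,
      ((-1:ℝ)^z * (((m-1).factorial:ℝ) * ((n-1).factorial:ℝ)
          / (((m+z-1).factorial:ℝ) * (((n-z)-1).factorial:ℝ))))
        * (((n-1-z).factorial : ℝ) / ((n-1).factorial : ℝ)
          * ∑ j ∈ range (n-z),
              (((m-1+z+j).factorial:ℝ) / (((m-1).factorial:ℝ) * (j.factorial:ℝ)))
                * t^(z+j) * s^m)
    = ∑ k ∈ range n, ((m-2+k).choose k : ℝ) * t^k * s^m := by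
  have step1 : (∑ z ∈ range n,
      ((-1:ℝ)^z * (((m-1).factorial:ℝ) * ((n-1).factorial:ℝ)
          / (((m+z-1).factorial:ℝ) * (((n-z)-1).factorial:ℝ))))
        * (((n-1-z).factorial : ℝ) / ((n-1).factorial : ℝ)
          * ∑ j ∈ range (n-z),
              (((m-1+z+j).factorial:ℝ) / (((m-1).factorial:ℝ) * (j.factorial:ℝ)))
                * t^(z+j) * s^m))
      = ∑ z ∈ range n, ∑ j ∈ range (n-z),
        (-1:ℝ)^z * ((m-1+z+j).choose j : ℝ) * t^(z+j) * s^m := by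
      refine Finset.sum_congr rfl fun z hz => ?_
      rw [Finset.mem_range] at hz
      simp only [Finset.mul_sum]
      refine Finset.sum_congr rfl fun j hj => ?_
      rw [Finset.mem_range] at hj
      rw [Nat.cast_choose ℝ (Nat.le_add_left j (m-1+z))]
      rw [show (m-1+z+j) - j = m-1+z from by omega]
      rw [show (n-z)-1 = n-1-z from by omega, show m+z-1 = m-1+z from by omega]
      have h1 : ((n-1).factorial:ℝ) ≠ 0 := by positivity
      have h2 : ((m-1).factorial:ℝ) ≠ 0 := by positivity
      have h3 : ((m-1+z).factorial:ℝ) ≠ 0 := by positivity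
      have h4 : ((n-1-z).factorial:ℝ) ≠ 0 := by positivity
      have h5 : ((j).factorial:ℝ) ≠ 0 := by positivity
      field_simp
  rw [step1, reindex_sum n _]
  refine Finset.sum_congr rfl fun k hk => ?_
  have hterm : ∀ z ∈ range (k+1),
      (-1:ℝ)^z * ((m-1+z+(k-z)).choose (k-z) : ℝ) * t^(z+(k-z)) * s^m
      = ((-1:ℝ)^z * (((m-1+k).choose (k-z)):ℝ)) * (t^k * s^m) := by
    intro z hz; rw [Finset.mem_range] at hz
    rw [show m-1+z+(k-z) = m-1+k from by omega, show z+(k-z) = k from by omega]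
    ring
  rw [Finset.sum_congr rfl hterm, ← Finset.sum_mul, alt_choose_sum (m-1+k) (by omega)]
  rw [show m-1+k-1 = m-2+k from by omega]
  ring

lemma sum_two (n m : ℕ) (hn : 2 ≤ n) (hm : 2 ≤ m) (t s : ℝ) :
    ∑ z ∈ range (m-1),
      ((-1:ℝ)^z * (((m-1).factorial:ℝ) * ((n-1).factorial:ℝ)
          / ((((n+z+1)-1).factorial:ℝ) * (((m-z-1)-1).factorial:ℝ))))
        * (((m-2-z).factorial : ℝ) / ((m-1).factorial : ℝ)
          * ∑ j ∈ range (m-1-z),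
              (((n+z+j).factorial:ℝ) / (((n-1).factorial:ℝ) * (j.factorial:ℝ)))
                * t^n * s^(z+1+j))
    = ∑ k ∈ range (m-1), ((n-1+k).choose k : ℝ) * t^n * s^(k+1) := by
  have step1 : (∑ z ∈ range (m-1),
      ((-1:ℝ)^z * (((m-1).factorial:ℝ) * ((n-1).factorial:ℝ)
          / ((((n+z+1)-1).factorial:ℝ) * (((m-z-1)-1).factorial:ℝ))))
        * (((m-2-z).factorial : ℝ) / ((m-1).factorial : ℝ)
          * ∑ j ∈ range (m-1-z),
              (((n+z+j).factorial:ℝ) / (((n-1).factorial:ℝ) * (j.factorial:ℝ)))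
                * t^n * s^(z+1+j)))
      = ∑ z ∈ range (m-1), ∑ j ∈ range (m-1-z),
        (-1:ℝ)^z * ((n+z+j).choose j : ℝ) * t^n * s^(z+1+j) := by
      refine Finset.sum_congr rfl fun z hz => ?_
      rw [Finset.mem_range] at hz
      simp only [Finset.mul_sum]
      refine Finset.sum_congr rfl fun j hj => ?_
      rw [Finset.mem_range] at hj
      rw [Nat.cast_choose ℝ (Nat.le_add_left j (n+z))]
      rw [show (n+z+j) - j = n+z from by omega]
      rw [show (n+z+1)-1 = n+z from by omega, show (m-z-1)-1 = m-2-z from by omega]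
      have h1 : ((n-1).factorial:ℝ) ≠ 0 := by positivity
      have h2 : ((m-1).factorial:ℝ) ≠ 0 := by positivity
      have h3 : ((n+z).factorial:ℝ) ≠ 0 := by positivity
      have h4 : ((m-2-z).factorial:ℝ) ≠ 0 := by positivity
      have h5 : ((j).factorial:ℝ) ≠ 0 := by positivity
      field_simp
  rw [step1, reindex_sum (m-1) _]
  refine Finset.sum_congr rfl fun k hk => ?_
  have hterm : ∀ z ∈ range (k+1),
      (-1:ℝ)^z * ((n+z+(k-z)).choose (k-z) : ℝ) * t^n * s^(z+1+(k-z))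
      = ((-1:ℝ)^z * (((n+k).choose (k-z)):ℝ)) * (t^n * s^(k+1)) := by
    intro z hz; rw [Finset.mem_range] at hz
    rw [show n+z+(k-z) = n+k from by omega, show z+1+(k-z) = k+1 from by omega]
    ring
  rw [Finset.sum_congr rfl hterm, ← Finset.sum_mul, alt_choose_sum (n+k) (by omega)]
  rw [show n+k-1 = n-1+k from by omega]
  ring

end UMVUEHelpers

/-- If `U₁ ~ Gamma(n, α₁)` and `U₂ ~ Gamma(m, α₂)` are independent
(shape/rate parametrization) with `n, m ≥ 2` and `c > 0`, then
`E[φ_UM(U₁, U₂)] = α₂ / (c α₁ + α₂)`; i.e. `φ_UM` is an unbiased estimator of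
`φ(α₁, α₂) = α₂/(c α₁ + α₂)`. -/
theorem varphiUM_unbiased
    {Ω : Type*} [MeasurableSpace Ω] (μ : Measure Ω) [IsProbabilityMeasure μ]
    (n m : ℕ) (hn : 2 ≤ n) (hm : 2 ≤ m)
    (c α₁ α₂ : ℝ) (hc : 0 < c) (hα₁ : 0 < α₁) (hα₂ : 0 < α₂)
    (U₁ U₂ : Ω → ℝ) (hU₁m : Measurable U₁) (hU₂m : Measurable U₂)
    (hU₁ : Measure.map U₁ μ = gammaMeasure (n : ℝ) α₁)
    (hU₂ : Measure.map U₂ μ = gammaMeasure (m : ℝ) α₂)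
    (hindep : IndepFun U₁ U₂ μ) :
    ∫ ω, varphiUM n m c (U₁ ω) (U₂ ω) ∂μ = α₂ / (c * α₁ + α₂) := by
  haveI hP1 : IsProbabilityMeasure (gammaMeasure (n:ℝ) α₁) :=
    isProbabilityMeasure_gammaMeasure (by positivity) hα₁
  haveI hP2 : IsProbabilityMeasure (gammaMeasure (m:ℝ) α₂) :=
    isProbabilityMeasure_gammaMeasure (by positivity) hα₂
  set ν := (gammaMeasure (n:ℝ) α₁).prod (gammaMeasure (m:ℝ) α₂) with hνdef
  -- step 1: transport to the product measure
  have hmap : Measure.map (fun ω => (U₁ ω, U₂ ω)) μ = ν := by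
    rw [(indepFun_iff_map_prod_eq_prod_map_map hU₁m.aemeasurable hU₂m.aemeasurable).mp hindep,
      hU₁, hU₂]
  have hstep1 : ∫ ω, varphiUM n m c (U₁ ω) (U₂ ω) ∂μ
      = ∫ p : ℝ × ℝ, varphiUM n m c p.1 p.2 ∂ν := by
    rw [← hmap, integral_map (hU₁m.aemeasurable.prodMk hU₂m.aemeasurable)
      (measurable_varphi n m c).aestronglyMeasurable]
  rw [hstep1]
  -- step 2: decompose the integrand
  have hdecomp : (fun p : ℝ × ℝ => varphiUM n m c p.1 p.2)
      = fun p : ℝ × ℝ =>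
        (∑ z ∈ Finset.range n,
          ((-1 : ℝ) ^ z * (Real.Gamma (m : ℝ) * Real.Gamma (n : ℝ)
            / (Real.Gamma ((m + z : ℕ) : ℝ) * Real.Gamma ((n - z : ℕ) : ℝ))))
            * (if c * p.2 < p.1 then (c * p.2 / p.1) ^ z else 0))
        + (∑ z ∈ Finset.range (m - 1),
          ((-1 : ℝ) ^ z * (Real.Gamma (m : ℝ) * Real.Gamma (n : ℝ)
            / (Real.Gamma ((n + z + 1 : ℕ) : ℝ) * Real.Gamma ((m - z - 1 : ℕ) : ℝ))))
            * (if c * p.2 < p.1 then 0 else (p.1 / (c * p.2)) ^ (z + 1))) := by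
    funext p
    rw [varphiUM]
    by_cases hcond : c * p.2 < p.1
    · rw [if_pos (by rw [lt_div_iff₀ hc, mul_comm p.2 c]; exact hcond)]
      simp only [if_pos hcond, mul_zero, Finset.sum_const_zero, add_zero]
    · rw [if_neg (by rw [lt_div_iff₀ hc, mul_comm p.2 c]; exact fun h => hcond h)]
      simp only [if_neg hcond, mul_zero, Finset.sum_const_zero, zero_add]
  rw [hdecomp]
  -- step 3: integrability and linearity
  have hint1 : Integrable (fun p : ℝ × ℝ => ∑ z ∈ Finset.range n,
      ((-1 : ℝ) ^ z * (Real.Gamma (m : ℝ) * Real.Gamma (n : ℝ)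
        / (Real.Gamma ((m + z : ℕ) : ℝ) * Real.Gamma ((n - z : ℕ) : ℝ))))
        * (if c * p.2 < p.1 then (c * p.2 / p.1) ^ z else 0)) ν :=
    integrable_finset_sum _ fun z _ => (integrable_g1 n m hn hm z hα₁ hα₂ hc).const_mul _
  have hint2 : Integrable (fun p : ℝ × ℝ => ∑ z ∈ Finset.range (m-1),
      ((-1 : ℝ) ^ z * (Real.Gamma (m : ℝ) * Real.Gamma (n : ℝ)
        / (Real.Gamma ((n + z + 1 : ℕ) : ℝ) * Real.Gamma ((m - z - 1 : ℕ) : ℝ))))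
        * (if c * p.2 < p.1 then 0 else (p.1 / (c * p.2)) ^ (z+1))) ν :=
    integrable_finset_sum _ fun z _ => (integrable_g2 n m hn hm z hα₁ hα₂ hc).const_mul _
  rw [integral_add hint1 hint2,
    integral_finset_sum _ (fun z _ => (integrable_g1 n m hn hm z hα₁ hα₂ hc).const_mul _),
    integral_finset_sum _ (fun z _ => (integrable_g2 n m hn hm z hα₁ hα₂ hc).const_mul _)]
  -- step 4: evaluate each integral
  set t : ℝ := α₁ * c / (α₁ * c + α₂) with htdef
  set s : ℝ := α₂ / (α₁ * c + α₂) with hsdef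
  have hsum1 : ∑ z ∈ Finset.range n, ∫ p : ℝ × ℝ,
      ((-1 : ℝ) ^ z * (Real.Gamma (m : ℝ) * Real.Gamma (n : ℝ)
        / (Real.Gamma ((m + z : ℕ) : ℝ) * Real.Gamma ((n - z : ℕ) : ℝ))))
        * (if c * p.2 < p.1 then (c * p.2 / p.1) ^ z else 0) ∂ν
      = ∑ k ∈ range n, ((m-2+k).choose k : ℝ) * t^k * s^m := by
    rw [← sum_one n m hn hm t s]
    refine Finset.sum_congr rfl fun z hz => ?_
    rw [Finset.mem_range] at hz
    rw [integral_const_mul, J1_eval n m hn hm z hz hα₁ hα₂ hc]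
    rw [Gamma_natCast (m+z) (by omega), Gamma_natCast (n-z) (by omega),
      Gamma_natCast m (by omega), Gamma_natCast n (by omega)]
  have hsum2 : ∑ z ∈ Finset.range (m-1), ∫ p : ℝ × ℝ,
      ((-1 : ℝ) ^ z * (Real.Gamma (m : ℝ) * Real.Gamma (n : ℝ)
        / (Real.Gamma ((n + z + 1 : ℕ) : ℝ) * Real.Gamma ((m - z - 1 : ℕ) : ℝ))))
        * (if c * p.2 < p.1 then 0 else (p.1 / (c * p.2)) ^ (z+1)) ∂ν
      = ∑ k ∈ range (m-1), ((n-1+k).choose k : ℝ) * t^n * s^(k+1) := by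
    rw [← sum_two n m hn hm t s]
    refine Finset.sum_congr rfl fun z hz => ?_
    rw [Finset.mem_range] at hz
    rw [integral_const_mul, J2_eval n m hn hm z hz hα₁ hα₂ hc]
    rw [Gamma_natCast (n+z+1) (by omega), Gamma_natCast (m-z-1) (by omega),
      Gamma_natCast m (by omega), Gamma_natCast n (by omega)]
  rw [hsum1, hsum2]
  -- step 5: conclude with the key combinatorial identity
  have hst : s + t = 1 := by
    rw [htdef, hsdef]
    field_simp
    ring
  have hkey := key_identity n (by omega) (m-1) (by omega) s t hst
  rw [show (m-1)-1 = m-2 from by omega] at hkey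
  have hsm : s^m = s * s^(m-1) := by
    have h := pow_succ s (m-1)
    rw [show (m-1)+1 = m from by omega] at h
    rw [h]; ring
  have hA : ∑ k ∈ range n, ((m-2+k).choose k : ℝ) * t^k * s^m
      = (∑ k ∈ range n, ((m-2+k).choose k : ℝ) * t^k) * s^m := by
    rw [Finset.sum_mul]
  have hB : ∑ k ∈ range (m-1), ((n-1+k).choose k : ℝ) * t^n * s^(k+1)
      = (∑ k ∈ range (m-1), ((n-1+k).choose k : ℝ) * s^k) * (t^n * s) := by
    rw [Finset.sum_mul]
    refine Finset.sum_congr rfl fun k _ => ?_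
    rw [pow_succ]
    ring
  rw [hA, hB]
  have hgoal : α₂ / (c * α₁ + α₂) = s := by
    rw [hsdef]
    ring
  rw [hgoal]
  linear_combination s * hkey + (∑ k ∈ range n, ((m-2+k).choose k : ℝ) * t^k) * hsm
end
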